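/- arXiv:1901.10542 — 6 statements merged into one kernel-verified Lean document; each statement's English description precedes it below -/
import Mathlib

section
/- Let ρ > 0 be a real number and let (a_n)_{n∈ℕ} be pairwise distinct nonzero complex numbers with ∑_n |a_n|^{-ρ} = ∞. Let f : ℂ → ℂ be an entire function, not identically zero, with f(a_n) = 0 for every n. Then for every real ρ' < ρ and all constants C > 0, K > 0 there exists z ∈ ℂ with |f(z)| > C·exp(K·|z|^{ρ'}). In other words, the order of f is at least ρ. -/
open Complex

lemma factor_one (f : ℂ → ℂ) (hf : ∀ z, AnalyticAt ℂ f z) (c : ℂ) (hc : f c = 0) :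
    ∃ g : ℂ → ℂ, (∀ z, AnalyticAt ℂ g z) ∧ ∀ z, f z = (z - c) * g z := by
  refine ⟨dslope f c, fun z => ?_, fun z => ?_⟩
  · rcases eq_or_ne z c with rfl | hz
    · obtain ⟨p, hp⟩ := hf z
      exact ⟨p.fslope, hp.has_fpower_series_dslope_fslope⟩
    · have h1 : AnalyticAt ℂ (fun z => (z - c)⁻¹ • (f z - f c)) z := by
        exact (((analyticAt_id).sub analyticAt_const).inv (sub_ne_zero.2 hz)).smul
          ((hf z).sub analyticAt_const)
      refine h1.congr ?_
      filter_upwards [isOpen_ne.mem_nhds hz] with x hx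
      simp [dslope_of_ne f hx, slope_def_module]
  · have := sub_smul_dslope f c z
    rw [hc, sub_zero] at this
    rw [← this]; simp [smul_eq_mul]

lemma factor_finset (b : ℕ → ℂ) (hb : Function.Injective b) :
    ∀ s : Finset ℕ, ∀ f : ℂ → ℂ, (∀ z, AnalyticAt ℂ f z) → (∀ k ∈ s, f (b k) = 0) →
    ∃ g : ℂ → ℂ, (∀ z, AnalyticAt ℂ g z) ∧ ∀ z, f z = (∏ k ∈ s, (z - b k)) * g z := by
  intro s
  induction s using Finset.induction_on with
  | empty => intro f hf _; exact ⟨f, hf, fun z => by simp⟩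
  | @insert j s hj ih =>
    intro f hf hz
    obtain ⟨g, hg, hfg⟩ := ih f hf (fun k hk => hz k (Finset.mem_insert_of_mem hk))
    have hprod : (∏ k ∈ s, (b j - b k)) ≠ 0 := by
      refine Finset.prod_ne_zero_iff.2 fun k hk => sub_ne_zero.2 ?_
      exact fun h => hj (hb h ▸ hk)
    have hgj : g (b j) = 0 := by
      have := hfg (b j)
      rw [hz j (Finset.mem_insert_self j s)] at this
      exact (mul_eq_zero.1 this.symm).resolve_left hprod
    obtain ⟨h, hh, hgh⟩ := factor_one g hg (b j) hgj
    refine ⟨h, hh, fun z => ?_⟩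
    rw [hfg z, hgh z, Finset.prod_insert hj]; ring

lemma counting (f : ℂ → ℂ) (hf : ∀ z, AnalyticAt ℂ f z) (b : ℕ → ℂ) (hb : Function.Injective b)
    (r M : ℝ) (hr : 0 < r) (s : Finset ℕ) (hbz : ∀ k ∈ s, f (b k) = 0)
    (hbr : ∀ k ∈ s, ‖b k‖ ≤ r) (hM : ∀ z : ℂ, ‖z‖ = 3 * r → ‖f z‖ ≤ M) :
    ‖f 0‖ * 2 ^ s.card ≤ M := by
  obtain ⟨g, hg, hfg⟩ := factor_finset b hb s f hf hbz
  -- bound g on sphere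
  have hgs : ∀ z : ℂ, ‖z‖ = 3 * r → ‖g z‖ ≤ M / (2 * r) ^ s.card := by
    intro z hzn
    have hprod : (2 * r) ^ s.card ≤ ‖∏ k ∈ s, (z - b k)‖ := by
      rw [norm_prod]
      calc (2*r) ^ s.card = ∏ _k ∈ s, (2*r) := by rw [Finset.prod_const]
      _ ≤ ∏ k ∈ s, ‖z - b k‖ := by
          refine Finset.prod_le_prod (fun k _ => by positivity) (fun k hk => ?_)
          calc 2 * r = 3 * r - r := by ring
          _ ≤ ‖z‖ - ‖b k‖ := by rw [hzn]; linarith [hbr k hk]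
          _ ≤ ‖z - b k‖ := by
              have := norm_sub_norm_le z (b k); linarith
    have hfz : ‖f z‖ = ‖∏ k ∈ s, (z - b k)‖ * ‖g z‖ := by rw [hfg z, norm_mul]
    have h2r : (0:ℝ) < (2*r) ^ s.card := by positivity
    have hMz : ‖∏ k ∈ s, (z - b k)‖ * ‖g z‖ ≤ M := hfz ▸ hM z hzn
    rw [le_div_iff₀ h2r]
    calc ‖g z‖ * (2*r) ^ s.card ≤ ‖g z‖ * ‖∏ k ∈ s, (z - b k)‖ :=
          mul_le_mul_of_nonneg_left hprod (norm_nonneg _)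
    _ ≤ M := by rw [mul_comm]; exact hMz
  -- maximum modulus
  have hg0 : ‖g 0‖ ≤ M / (2 * r) ^ s.card := by
    have hU : Bornology.IsBounded (Metric.ball (0:ℂ) (3*r)) := Metric.isBounded_ball
    have hd : DiffContOnCl ℂ g (Metric.ball (0:ℂ) (3*r)) := by
      have : Differentiable ℂ g := fun z => (hg z).differentiableAt
      exact this.diffContOnCl
    have hfr : ∀ z ∈ frontier (Metric.ball (0:ℂ) (3*r)), ‖g z‖ ≤ M / (2*r) ^ s.card := by
      intro z hz
      rw [frontier_ball _ (by positivity : (3*r:ℝ) ≠ 0)] at hz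
      exact hgs z (by simpa [Complex.dist_eq] using hz)
    refine Complex.norm_le_of_forall_mem_frontier_norm_le hU hd hfr ?_
    exact subset_closure (by simp [Metric.mem_ball]; positivity)
  -- evaluate at 0
  have hf0 : ‖f 0‖ ≤ r ^ s.card * ‖g 0‖ := by
    rw [hfg 0, norm_mul, norm_prod]
    refine mul_le_mul_of_nonneg_right ?_ (norm_nonneg _)
    calc ∏ k ∈ s, ‖(0:ℂ) - b k‖ ≤ ∏ _k ∈ s, r := by
          refine Finset.prod_le_prod (fun k _ => norm_nonneg _) (fun k hk => ?_)
          simpa using hbr k hk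
    _ = r ^ s.card := Finset.prod_const r
  have key : ‖f 0‖ * 2 ^ s.card ≤ r ^ s.card * ‖g 0‖ * 2 ^ s.card :=
    mul_le_mul_of_nonneg_right hf0 (by positivity)
  calc ‖f 0‖ * 2 ^ s.card ≤ r ^ s.card * ‖g 0‖ * 2 ^ s.card := key
  _ ≤ r ^ s.card * (M / (2*r) ^ s.card) * 2 ^ s.card := by
      refine mul_le_mul_of_nonneg_right (mul_le_mul_of_nonneg_left hg0 (by positivity)) (by positivity)
  _ = M := by
      rw [mul_pow]
      field_simp

lemma pow_rpow_comm (x : ℝ) (hx : 0 ≤ x) (t : ℝ) (j : ℕ) : ((x:ℝ)^j) ^ t = (x ^ t) ^ j := by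
  rw [← Real.rpow_natCast x j, ← Real.rpow_mul hx, mul_comm, Real.rpow_mul hx, Real.rpow_natCast]

/-- If an entire function (not identically zero) vanishes on a sequence of pairwise distinct
nonzero points whose `ρ`-th power reciprocal norms are not summable, then the order of the
entire function is at least `ρ`: no bound `|f z| ≤ C exp (K |z|^{ρ'})` with `ρ' < ρ` can hold. -/
theorem order_ge_of_zeros
    (ρ : ℝ) (hρ : 0 < ρ) (a : ℕ → ℂ) (ha : ∀ n, a n ≠ 0)
    (hinj : Function.Injective a)
    (hdiv : ¬ Summable fun n => ‖a n‖ ^ (-ρ))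
    (f : ℂ → ℂ) (hf : ∀ z, AnalyticAt ℂ f z) (hne : f ≠ 0)
    (hzero : ∀ n, f (a n) = 0) :
    ∀ ρ' : ℝ, ρ' < ρ → ∀ C : ℝ, 0 < C → ∀ K : ℝ, 0 < K →
      ∃ z : ℂ, C * Real.exp (K * ‖z‖ ^ ρ') < ‖f z‖ := by

  intro ρ' hρ' C hC K hK
  by_contra hcon
  push_neg at hcon
  set σ := max ρ' (ρ/2) with hσdef
  have hσ0 : 0 < σ := lt_max_of_lt_right (by linarith)
  have hσρ : σ < ρ := max_lt hρ' (by linarith)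
  have hbound : ∀ z : ℂ, 1 ≤ ‖z‖ → ‖f z‖ ≤ C * Real.exp (K * ‖z‖ ^ σ) := by
    intro z hz
    refine (hcon z).trans ?_
    have : ‖z‖ ^ ρ' ≤ ‖z‖ ^ σ := Real.rpow_le_rpow_of_exponent_le hz (le_max_left _ _)
    have hKe : K * ‖z‖ ^ ρ' ≤ K * ‖z‖ ^ σ := by nlinarith
    exact mul_le_mul_of_nonneg_left (Real.exp_le_exp.2 hKe) hC.le
  obtain ⟨w, hw⟩ : ∃ w, f w ≠ 0 := by
    by_contra hno; push_neg at hno; exact hne (funext fun z => hno z)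
  set F : ℂ → ℂ := fun z => f (z + w) with hFdef
  set b : ℕ → ℂ := fun n => a n - w with hbdef
  have hF : ∀ z, AnalyticAt ℂ F z := by
    intro z
    have h1 : AnalyticAt ℂ (fun z' : ℂ => z' + w) z := by
      exact (analyticAt_id).add analyticAt_const
    have h2 : AnalyticAt ℂ (f ∘ fun z' : ℂ => z' + w) z :=
      AnalyticAt.comp (f := fun z' : ℂ => z' + w) (hf (z + w)) h1
    exact h2
  have hF0 : F 0 ≠ 0 := by simpa [hFdef] using hw
  have hFb : ∀ n, F (b n) = 0 := fun n => by simp [hFdef, hbdef, hzero n]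
  have hbinj : Function.Injective b := fun m n h => hinj (by
    have := congrArg (· + w) h; simpa [hbdef] using this)
  set R1 : ℝ := max 1 (2 * ‖w‖) with hR1def
  have hR1one : (1:ℝ) ≤ R1 := le_max_left _ _
  have hR1w : 2 * ‖w‖ ≤ R1 := le_max_right _ _
  have hR1pos : (0:ℝ) < R1 := by linarith
  obtain ⟨c0, hc0eq⟩ : ∃ c0 : ℝ, c0 = ‖F 0‖ := ⟨_, rfl⟩
  have hc0 : (0:ℝ) < c0 := hc0eq ▸ norm_pos_iff.2 hF0
  -- counting bound
  have hcount : ∀ r : ℝ, R1 ≤ r → ∀ T : Finset ℕ, (∀ n ∈ T, ‖b n‖ ≤ r) →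
      c0 * 2 ^ T.card ≤ C * Real.exp (K * ((4:ℝ) * r) ^ σ) := by
    intro r hr T hT
    have hrpos : (0:ℝ) < r := lt_of_lt_of_le hR1pos hr
    rw [hc0eq]
    refine counting F hF b hbinj r _ hrpos T (fun n _ => hFb n) hT ?_
    intro z hz
    have hzw1 : 2 * r ≤ ‖z + w‖ := by
      have h1 : ‖z‖ - ‖w‖ ≤ ‖z + w‖ := by
        have := norm_sub_norm_le z (-w); simpa [sub_neg_eq_add] using this
      have : ‖w‖ ≤ r := by linarith
      linarith [hz ▸ h1]
    have hzw0 : 1 ≤ ‖z + w‖ := by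
      have : (1:ℝ) ≤ r := le_trans hR1one hr
      linarith
    have hzw2 : ‖z + w‖ ≤ 4 * r := by
      have := norm_add_le z w
      have : ‖z + w‖ ≤ 3 * r + ‖w‖ := by rw [← hz]; exact norm_add_le z w
      have hwr : ‖w‖ ≤ r := by linarith
      linarith
    refine (hbound (z + w) hzw0).trans ?_
    have hrp : ‖z + w‖ ^ σ ≤ ((4:ℝ) * r) ^ σ :=
      Real.rpow_le_rpow (norm_nonneg _) hzw2 hσ0.le
    have : K * ‖z + w‖ ^ σ ≤ K * ((4:ℝ)*r) ^ σ := by nlinarith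
    exact mul_le_mul_of_nonneg_left (Real.exp_le_exp.2 this) hC.le
  -- logarithmic card bound
  have hlog2 : (0:ℝ) < Real.log 2 := Real.log_pos one_lt_two
  set D : ℝ := max 0 ((Real.log C - Real.log c0) / Real.log 2) with hDdef
  set E : ℝ := K * (4:ℝ) ^ σ / Real.log 2 with hEdef
  have hD0 : 0 ≤ D := le_max_left _ _
  have hE0 : 0 < E := by
    apply div_pos (mul_pos hK (Real.rpow_pos_of_pos (by norm_num) σ)) hlog2
  have hcard : ∀ r : ℝ, R1 ≤ r → ∀ T : Finset ℕ, (∀ n ∈ T, ‖b n‖ ≤ r) →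
      (T.card : ℝ) ≤ D + E * r ^ σ := by
    intro r hr T hT
    have h := hcount r hr T hT
    have hrpos : (0:ℝ) < r := lt_of_lt_of_le hR1pos hr
    have hlog : Real.log (c0 * 2 ^ T.card) ≤ Real.log (C * Real.exp (K * ((4:ℝ)*r) ^ σ)) :=
      Real.log_le_log (by positivity) h
    rw [Real.log_mul hc0.ne' (by positivity), Real.log_mul hC.ne' (Real.exp_ne_zero _),
      Real.log_exp, Real.log_pow] at hlog
    have h4r : ((4:ℝ) * r) ^ σ = (4:ℝ)^σ * r^σ := Real.mul_rpow (by norm_num) hrpos.le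
    rw [h4r, ← mul_assoc] at hlog
    have hstep : (T.card : ℝ) * Real.log 2 ≤ (Real.log C - Real.log c0) + K * (4:ℝ)^σ * r^σ := by
      linarith
    have hr2 : (T.card : ℝ) ≤ ((Real.log C - Real.log c0) / Real.log 2) + E * r^σ := by
      rw [div_add' _ _ _ hlog2.ne', le_div_iff₀ hlog2]
      rw [hEdef]; field_simp; linarith
    exact hr2.trans (by gcongr; exact le_max_right _ _)
  -- the small set is finite
  have hterm_nonneg : ∀ n : ℕ, 0 ≤ ‖a n‖ ^ (-ρ) := fun n => Real.rpow_nonneg (norm_nonneg _) _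
  have hS0fin : {n : ℕ | ‖b n‖ ≤ R1}.Finite := by
    by_contra hinf
    have hinf2 : {n : ℕ | ‖b n‖ ≤ R1}.Infinite := hinf
    obtain ⟨t, hts, htc⟩ := hinf2.exists_subset_card_eq (⌈D + E * R1 ^ σ⌉₊ + 1)
    have hle := hcard R1 le_rfl t (fun n hn => hts hn)
    rw [htc] at hle
    push_cast at hle
    have := Nat.le_ceil (D + E * R1 ^ σ)
    linarith
  set S0 := hS0fin.toFinset with hS0def
  set B0 : ℝ := ∑ n ∈ S0, ‖a n‖ ^ (-ρ) with hB0def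
  -- geometric bound function
  set x : ℝ := (2:ℝ) ^ (-ρ) with hxdef
  set y : ℝ := (2:ℝ) ^ (σ - ρ) with hydef
  have hx0 : 0 < x := Real.rpow_pos_of_pos two_pos _
  have hx1 : x < 1 := Real.rpow_lt_one_of_one_lt_of_neg one_lt_two (by linarith)
  have hy0 : 0 < y := Real.rpow_pos_of_pos two_pos _
  have hy1 : y < 1 := Real.rpow_lt_one_of_one_lt_of_neg one_lt_two (by linarith)
  set P : ℝ := D * (R1 / 2) ^ (-ρ) with hPdef
  set Q : ℝ := E * (R1 ^ σ * (2:ℝ) ^ σ) * (R1 / 2) ^ (-ρ) with hQdef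
  have hP0 : 0 ≤ P := mul_nonneg hD0 (Real.rpow_nonneg (by positivity) _)
  have hQ0 : 0 ≤ Q :=
    mul_nonneg (mul_nonneg hE0.le
      (mul_nonneg (Real.rpow_nonneg hR1pos.le _) (Real.rpow_nonneg (by norm_num) _)))
      (Real.rpow_nonneg (by positivity) _)
  set g : ℕ → ℝ := fun j => P * x ^ j + Q * y ^ j with hgdef
  have hgsum : Summable g :=
    ((summable_geometric_of_lt_one hx0.le hx1).mul_left P).add
      ((summable_geometric_of_lt_one hy0.le hy1).mul_left Q)
  have hgnn : ∀ j, 0 ≤ g j := fun j =>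
    add_nonneg (mul_nonneg hP0 (pow_nonneg hx0.le j)) (mul_nonneg hQ0 (pow_nonneg hy0.le j))
  -- shell identity
  have hshell : ∀ j : ℕ, (D + E * (R1 * 2 ^ (j+1)) ^ σ) * (R1 * 2 ^ j / 2) ^ (-ρ) = g j := by
    intro j
    have h1 : (R1 * 2 ^ (j+1) : ℝ) = (R1 * 2) * 2 ^ j := by ring
    have h2 : (R1 * 2 ^ j / 2 : ℝ) = (R1 / 2) * 2 ^ j := by ring
    have h3 : ((2:ℝ) ^ (σ - ρ)) ^ j = ((2:ℝ) ^ σ) ^ j * ((2:ℝ) ^ (-ρ)) ^ j := by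
      rw [← mul_pow, ← Real.rpow_add two_pos]
      ring_nf
    rw [h1, h2, Real.mul_rpow (by positivity) (by positivity),
      Real.mul_rpow (by positivity) (by positivity),
      Real.mul_rpow (by positivity) (by positivity),
      pow_rpow_comm 2 (by norm_num) σ j, pow_rpow_comm 2 (by norm_num) (-ρ) j]
    simp only [hgdef, hxdef, hydef]
    rw [h3]
    ring
  -- monotonicity of negative power
  have hmono : ∀ u v : ℝ, 0 < u → u ≤ v → v ^ (-ρ) ≤ u ^ (-ρ) := by
    intro u v hu huv
    rw [Real.rpow_neg hu.le, Real.rpow_neg (by linarith)]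
    exact inv_anti₀ (Real.rpow_pos_of_pos hu ρ) (Real.rpow_le_rpow hu.le huv hρ.le)
  -- main induction
  have hmain : ∀ J : ℕ, ∀ T : Finset ℕ, (∀ n ∈ T, ‖b n‖ ≤ R1 * 2 ^ J) →
      ∑ n ∈ T, ‖a n‖ ^ (-ρ) ≤ B0 + ∑ j ∈ Finset.range J, g j := by
    intro J
    induction J with
    | zero =>
      intro T hT
      have hsub : T ⊆ S0 := by
        intro n hn
        rw [hS0fin.mem_toFinset]
        have := hT n hn
        simpa using this
      simp only [Finset.range_zero, Finset.sum_empty, add_zero]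
      exact Finset.sum_le_sum_of_subset_of_nonneg hsub (fun n _ _ => hterm_nonneg n)
    | succ J ih =>
      intro T hT
      set T1 := T.filter (fun n => ‖b n‖ ≤ R1 * 2 ^ J) with hT1def
      set T2 := T.filter (fun n => ¬ (‖b n‖ ≤ R1 * 2 ^ J)) with hT2def
      have hsplit : ∑ n ∈ T, ‖a n‖ ^ (-ρ)
          = ∑ n ∈ T1, ‖a n‖ ^ (-ρ) + ∑ n ∈ T2, ‖a n‖ ^ (-ρ) :=
        (Finset.sum_filter_add_sum_filter_not T _ _).symm
      have h1 : ∑ n ∈ T1, ‖a n‖ ^ (-ρ) ≤ B0 + ∑ j ∈ Finset.range J, g j :=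
        ih T1 (fun n hn => (Finset.mem_filter.1 hn).2)
      have hpowJ : (1:ℝ) ≤ 2 ^ J := one_le_pow₀ one_le_two
      have hpowJ1 : (1:ℝ) ≤ 2 ^ (J+1) := one_le_pow₀ one_le_two
      have hT2' : ∀ n ∈ T2, ‖b n‖ ≤ R1 * 2 ^ (J+1) := fun n hn =>
        hT n (Finset.mem_filter.1 hn).1
      have h2 : ∑ n ∈ T2, ‖a n‖ ^ (-ρ) ≤ g J := by
        have hlb : (0:ℝ) < R1 * 2 ^ J / 2 := by positivity
        have hterm : ∀ n ∈ T2, ‖a n‖ ^ (-ρ) ≤ (R1 * 2 ^ J / 2) ^ (-ρ) := by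
          intro n hn
          have hbn : R1 * 2 ^ J < ‖b n‖ := by
            have := (Finset.mem_filter.1 hn).2
            push_neg at this; exact this
          have hanbn : ‖b n‖ - ‖w‖ ≤ ‖a n‖ := by
            have h4 : ‖b n‖ - ‖-w‖ ≤ ‖b n - -w‖ := norm_sub_norm_le _ _
            have h5 : b n - -w = a n := by rw [hbdef]; ring
            rw [h5, norm_neg] at h4; exact h4
          have hwle : ‖w‖ ≤ R1 * 2 ^ J / 2 := by
            have : R1 ≤ R1 * 2 ^ J := le_mul_of_one_le_right hR1pos.le hpowJ
            linarith
          have : R1 * 2 ^ J / 2 ≤ ‖a n‖ := by linarith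
          exact hmono _ _ hlb this
        calc ∑ n ∈ T2, ‖a n‖ ^ (-ρ) ≤ ∑ _n ∈ T2, (R1 * 2 ^ J / 2) ^ (-ρ) :=
              Finset.sum_le_sum hterm
        _ = (T2.card : ℝ) * (R1 * 2 ^ J / 2) ^ (-ρ) := by
              rw [Finset.sum_const, nsmul_eq_mul]
        _ ≤ (D + E * (R1 * 2 ^ (J+1)) ^ σ) * (R1 * 2 ^ J / 2) ^ (-ρ) := by
              refine mul_le_mul_of_nonneg_right ?_ (Real.rpow_nonneg hlb.le _)
              exact hcard (R1 * 2 ^ (J+1)) (le_mul_of_one_le_right hR1pos.le hpowJ1) T2 hT2'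
        _ = g J := hshell J
      rw [hsplit, Finset.sum_range_succ]
      linarith
  -- summability
  have hsummable : Summable fun n => ‖a n‖ ^ (-ρ) := by
    apply summable_of_sum_range_le (c := B0 + ∑' j, g j) hterm_nonneg
    intro m
    obtain ⟨J, hJ⟩ : ∃ J : ℕ, ∑ k ∈ Finset.range m, ‖b k‖ ≤ R1 * 2 ^ J := by
      obtain ⟨J, hJ⟩ := pow_unbounded_of_one_lt (∑ k ∈ Finset.range m, ‖b k‖) one_lt_two
      exact ⟨J, hJ.le.trans (le_mul_of_one_le_left (by positivity) hR1one)⟩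
    have hTm : ∀ n ∈ Finset.range m, ‖b n‖ ≤ R1 * 2 ^ J := fun n hn =>
      le_trans (Finset.single_le_sum (fun k _ => norm_nonneg (b k)) hn) hJ
    refine (hmain J (Finset.range m) hTm).trans ?_
    exact add_le_add_right (Summable.sum_le_tsum (Finset.range J) (fun j _ => hgnn j) hgsum) B0
  exact hdiv hsummable
end

section
/- Let f : ℂ → ℂ be an entire function with f(z) ≠ 0 for every z ∈ ℂ, and suppose there are an integer p ∈ ℕ and constants C > 0, K > 0 such that |f(z)| ≤ C·exp(K·|z|^p) for all z ∈ ℂ. Then there exists a polynomial P with complex coefficients of degree at most p such that f(z) = exp(P(z)) for all z ∈ ℂ. -/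
open Complex intervalIntegral Real


set_option maxHeartbeats 1000000 in
lemma exists_entire_log_aux (f h : ℂ → ℂ) (hf : Differentiable ℂ f)
    (hh : Differentiable ℂ h) (hdhc : Continuous (deriv h))
    (heq : ∀ z, deriv f z = h z * f z) (hne : ∀ z, f z ≠ 0) :
    ∃ g : ℂ → ℂ, Differentiable ℂ g ∧ ∀ z, f z = Complex.exp (g z) := by
  have hhc : Continuous h := hh.continuous
  have cmul : Continuous fun p : ℂ × ℝ => (↑p.2 : ℂ) * p.1 :=
    (Complex.continuous_ofReal.comp continuous_snd).mul continuous_fst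
  refine ⟨fun z => Complex.log (f 0) + ∫ t in (0:ℝ)..1, z * h (↑t * z), ?_, ?_⟩
  · -- differentiability
    intro x₀
    apply DifferentiableAt.add (differentiableAt_const _)
    have cont1 : ∀ x : ℂ, Continuous fun t : ℝ => x * h (↑t * x) := fun x =>
      continuous_const.mul (hhc.comp ((Complex.continuous_ofReal).mul continuous_const))
    have contF' : Continuous fun p : ℂ × ℝ =>
        h (↑p.2 * p.1) + p.1 * (↑p.2 * deriv h (↑p.2 * p.1)) :=
      (hhc.comp cmul).add (continuous_fst.mul
        ((Complex.continuous_ofReal.comp continuous_snd).mul (hdhc.comp cmul)))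
    obtain ⟨Cb, hCb⟩ := ((isCompact_closedBall x₀ 1).prod (isCompact_uIcc (a := (0:ℝ))
      (b := 1))).exists_bound_of_continuousOn contF'.continuousOn
    have hmeas : ∀ᶠ x in nhds x₀, MeasureTheory.AEStronglyMeasurable
        (fun t : ℝ => x * h (↑t * x)) (MeasureTheory.volume.restrict (Set.uIoc (0:ℝ) 1)) :=
      Filter.Eventually.of_forall fun x => (cont1 x).aestronglyMeasurable
    have hint : IntervalIntegrable (fun t : ℝ => x₀ * h (↑t * x₀))
        MeasureTheory.volume 0 1 := (cont1 x₀).intervalIntegrable _ _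
    have hmeas' : MeasureTheory.AEStronglyMeasurable
        (fun t : ℝ => h (↑t * x₀) + x₀ * (↑t * deriv h (↑t * x₀)))
        (MeasureTheory.volume.restrict (Set.uIoc (0:ℝ) 1)) :=
      (contF'.comp (Continuous.prodMk_right x₀)).aestronglyMeasurable
    have hbd : ∀ᵐ t ∂(MeasureTheory.volume), t ∈ Set.uIoc (0:ℝ) 1 →
        ∀ x ∈ Metric.ball x₀ 1,
          ‖h (↑t * x) + x * (↑t * deriv h (↑t * x))‖ ≤ Cb :=
      Filter.Eventually.of_forall fun t ht x hx =>
        hCb (x, t) ⟨Metric.ball_subset_closedBall hx, Set.uIoc_subset_uIcc ht⟩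
    have hdiff : ∀ᵐ t ∂(MeasureTheory.volume), t ∈ Set.uIoc (0:ℝ) 1 →
        ∀ x ∈ Metric.ball x₀ 1, HasDerivAt (fun x => x * h (↑t * x))
          (h (↑t * x) + x * (↑t * deriv h (↑t * x))) x := by
      refine Filter.Eventually.of_forall fun t ht x hx => ?_
      have base : HasDerivAt (fun x : ℂ => (↑t : ℂ) * x) (↑t) x := by
        simpa using (hasDerivAt_id x).const_mul (↑t : ℂ)
      have inner : HasDerivAt (fun x : ℂ => h (↑t * x)) (deriv h (↑t * x) * ↑t) x :=
        (hh _).hasDerivAt.comp x base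
      have H2 := (hasDerivAt_id x).mul inner
      refine H2.congr_deriv ?_
      simp only [id_eq]
      ring
    have main := intervalIntegral.hasDerivAt_integral_of_dominated_loc_of_deriv_le
      (Metric.ball_mem_nhds x₀ one_pos) hmeas hint hmeas' hbd intervalIntegrable_const hdiff
    exact main.2.differentiableAt
  · -- f = exp ∘ g
    intro z
    set G : ℝ → ℂ := fun u => ∫ t in (0:ℝ)..u, z * h (↑t * z) with hG_def
    have contI : Continuous fun t : ℝ => z * h (↑t * z) :=
      continuous_const.mul (hhc.comp ((Complex.continuous_ofReal).mul continuous_const))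
    have hG : ∀ u : ℝ, HasDerivAt G (z * h (↑u * z)) u := fun u =>
      (contI.integral_hasStrictDerivAt 0 u).hasDerivAt
    set F : ℝ → ℂ := fun u => f (↑u * z) * Complex.exp (-G u) with hF_def
    have hF : ∀ u : ℝ, HasDerivAt F 0 u := by
      intro u
      have d1 : HasDerivAt (fun u : ℝ => f (↑u * z)) (deriv f (↑u * z) * z) u := by
        have base2 : HasDerivAt (fun w : ℂ => w * z) z ↑u := by
          simpa using (hasDerivAt_id (↑u : ℂ)).mul_const z
        have : HasDerivAt (fun w : ℂ => f (w * z)) (deriv f (↑u * z) * z) ↑u :=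
          (hf _).hasDerivAt.comp _ base2
        exact this.comp_ofReal
      have d2 : HasDerivAt (fun u : ℝ => Complex.exp (-G u))
          (Complex.exp (-G u) * -(z * h (↑u * z))) u := ((hG u).neg).cexp
      have H3 := d1.mul d2
      refine H3.congr_deriv ?_
      rw [heq (↑u * z)]
      ring
    have hconst : F 1 = F 0 := by
      have : Differentiable ℝ F := fun u => (hF u).differentiableAt
      exact is_const_of_deriv_eq_zero this (fun u => (hF u).deriv) 1 0
    have hG0 : G 0 = 0 := integral_same
    have h1 : f z * Complex.exp (-G 1) = f 0 := by
      simpa [hG0, hF_def] using hconst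
    have h2 : f z = f 0 * Complex.exp (G 1) := by
      rw [← h1, mul_assoc, ← Complex.exp_add]
      simp
    rw [h2, Complex.exp_add, Complex.exp_log (hne 0)]


-- L1: ∫ u^{n+1} q(u) dθ = 0
lemma circ_pow_integral_zero (q : ℂ → ℂ) (hq : Differentiable ℂ q) {r : ℝ} (hr : 0 < r) (n : ℕ) :
    ∫ θ in (0:ℝ)..2*π, (circleMap 0 r θ)^(n+1) * q (circleMap 0 r θ) = 0 := by
  have h0 : (∮ z in C(0, r), z^n * q z) = 0 :=
    circleIntegral_eq_zero_of_differentiable_on_off_countable hr.le Set.countable_empty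
      ((Continuous.continuousOn (by have := hq.continuous; fun_prop)))
      (fun z _ => ((differentiable_pow n).mul hq) z)
  rw [circleIntegral] at h0
  have heq : ∀ θ : ℝ, deriv (circleMap 0 r) θ • ((circleMap 0 r θ)^n * q (circleMap 0 r θ))
      = I * ((circleMap 0 r θ)^(n+1) * q (circleMap 0 r θ)) := by
    intro θ
    rw [deriv_circleMap]
    simp only [smul_eq_mul, zero_add]
    ring
  rw [intervalIntegral.integral_congr (g := fun θ => I * ((circleMap 0 r θ)^(n+1) * q (circleMap 0 r θ))) (fun θ _ => heq θ)] at h0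
  rw [intervalIntegral.integral_const_mul] at h0
  simpa [Complex.I_ne_zero] using h0

lemma intervalIntegral_conj' {f : ℝ → ℂ} {a b : ℝ} :
    ∫ x in a..b, (starRingEnd ℂ) (f x) = (starRingEnd ℂ) (∫ x in a..b, f x) := by
  simp only [intervalIntegral]
  rw [integral_conj, integral_conj, map_sub]

-- conj of circleMap
lemma conj_circleMap' {r : ℝ} (hr : 0 < r) (θ : ℝ) :
    (starRingEnd ℂ) (circleMap 0 r θ) = (r:ℂ)^2 * (circleMap 0 r θ)⁻¹ := by
  have hne : circleMap 0 r θ ≠ 0 := circleMap_ne_center hr.ne'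
  have hms : circleMap 0 r θ * (starRingEnd ℂ) (circleMap 0 r θ) = ((r:ℂ))^2 := by
    rw [Complex.mul_conj]
    norm_cast
    rw [← Complex.sq_norm, norm_circleMap_zero, _root_.abs_of_pos hr]
  rw [← hms, mul_comm (circleMap 0 r θ), mul_assoc, mul_inv_cancel₀ hne, mul_one]

-- L2: ∫ u⁻¹^{n+1} conj(q(u)) dθ = 0
lemma circ_inv_pow_conj_integral_zero (q : ℂ → ℂ) (hq : Differentiable ℂ q) {r : ℝ}
    (hr : 0 < r) (n : ℕ) :
    ∫ θ in (0:ℝ)..2*π, ((circleMap 0 r θ)⁻¹)^(n+1) * (starRingEnd ℂ) (q (circleMap 0 r θ)) = 0 := by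
  have h1 := circ_pow_integral_zero q hq hr n
  have h2 : (starRingEnd ℂ) (∫ θ in (0:ℝ)..2*π,
      (circleMap 0 r θ)^(n+1) * q (circleMap 0 r θ)) = 0 := by rw [h1, map_zero]
  rw [← intervalIntegral_conj'] at h2
  have heq : ∀ θ : ℝ, (starRingEnd ℂ) ((circleMap 0 r θ)^(n+1) * q (circleMap 0 r θ))
      = ((r:ℂ)^2)^(n+1) * (((circleMap 0 r θ)⁻¹)^(n+1) * (starRingEnd ℂ) (q (circleMap 0 r θ))) := by
    intro θ
    rw [map_mul, map_pow, conj_circleMap' hr]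
    ring
  rw [intervalIntegral.integral_congr (fun θ _ => heq θ), intervalIntegral.integral_const_mul] at h2
  have hrne : ((r:ℂ)^2)^(n+1) ≠ 0 := by
    simp [Complex.ofReal_ne_zero, hr.ne']
  exact (mul_eq_zero.mp h2).resolve_left hrne

-- L3: coefficient formula
lemma cauchy_coeff_formula (q : ℂ → ℂ) {r : ℝ} (hr : 0 < r) (n : ℕ) :
    (cauchyPowerSeries q 0 r n fun _ => 1) =
      ((2*π:ℝ):ℂ)⁻¹ * ∫ θ in (0:ℝ)..2*π, ((circleMap 0 r θ)⁻¹)^n * q (circleMap 0 r θ) := by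
  rw [cauchyPowerSeries_apply]
  rw [circleIntegral]
  have heq : ∀ θ : ℝ, deriv (circleMap 0 r) θ •
      ((1 / (circleMap 0 r θ - 0))^n • (circleMap 0 r θ - 0)⁻¹ • q (circleMap 0 r θ))
      = I * (((circleMap 0 r θ)⁻¹)^n * q (circleMap 0 r θ)) := by
    intro θ
    have hne : circleMap 0 r θ ≠ 0 := circleMap_ne_center hr.ne'
    rw [deriv_circleMap]
    simp only [smul_eq_mul, sub_zero, one_div, zero_add]
    field_simp
  rw [intervalIntegral.integral_congr (fun θ _ => heq θ), intervalIntegral.integral_const_mul]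
  rw [smul_eq_mul, ← mul_assoc]
  congr 1
  rw [mul_inv, mul_assoc, inv_mul_cancel₀ Complex.I_ne_zero, mul_one]
  push_cast
  rfl

-- L4: mean value
lemma circ_mean_value (q : ℂ → ℂ) (hq : Differentiable ℂ q) {r : ℝ} (hr : 0 < r) :
    ∫ θ in (0:ℝ)..2*π, q (circleMap 0 r θ) = (2*π:ℝ) * q 0 := by
  have hd : DiffContOnCl ℂ q (Metric.ball 0 r) :=
    ⟨hq.differentiableOn, hq.continuous.continuousOn⟩
  have h0 := hd.circleIntegral_sub_inv_smul (w := 0) (by simpa using hr)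
  rw [circleIntegral] at h0
  have heq : ∀ θ : ℝ, deriv (circleMap 0 r) θ • ((circleMap 0 r θ - 0)⁻¹ • q (circleMap 0 r θ))
      = I * q (circleMap 0 r θ) := by
    intro θ
    have hne : circleMap 0 r θ ≠ 0 := circleMap_ne_center hr.ne'
    rw [deriv_circleMap]
    simp only [smul_eq_mul, sub_zero, zero_add]
    field_simp
  rw [intervalIntegral.integral_congr (fun θ _ => heq θ), intervalIntegral.integral_const_mul] at h0
  apply mul_left_cancel₀ Complex.I_ne_zero
  rw [h0, smul_eq_mul]
  push_cast
  ring

-- L5: coefficient bound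
lemma cauchy_coeff_bound (q : ℂ → ℂ) (hq : Differentiable ℂ q) {r : ℝ} (hr : 0 < r)
    (n : ℕ) (M : ℝ) (hM : ∀ θ : ℝ, (q (circleMap 0 r θ)).re ≤ M) :
    ‖cauchyPowerSeries q 0 r (n+1) fun _ => 1‖ ≤ 2 * (M - (q 0).re) / r^(n+1) := by
  have hne : ∀ θ : ℝ, circleMap 0 r θ ≠ 0 := fun θ => circleMap_ne_center hr.ne'
  have hcirc : Continuous fun θ : ℝ => circleMap 0 r θ := continuous_circleMap 0 r
  have hcq : Continuous fun θ : ℝ => q (circleMap 0 r θ) := hq.continuous.comp hcirc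
  have hinv : Continuous fun θ : ℝ => ((circleMap 0 r θ)⁻¹)^(n+1) :=
    (hcirc.inv₀ hne).pow _
  set u : ℝ → ℂ := fun θ => circleMap 0 r θ with hu
  set A : ℂ := ∫ θ in (0:ℝ)..2*π, ((u θ)⁻¹)^(n+1) * q (u θ) with hA
  -- key identity
  have key : A = ∫ θ in (0:ℝ)..2*π, ((u θ)⁻¹)^(n+1) * (((2*(q (u θ)).re - 2*M : ℝ)):ℂ) := by
    have i1 : IntervalIntegrable (fun θ => ((u θ)⁻¹)^(n+1) * q (u θ))
        MeasureTheory.volume 0 (2*π) := (hinv.mul hcq).intervalIntegrable _ _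
    have i2 : IntervalIntegrable (fun θ => ((u θ)⁻¹)^(n+1) * (starRingEnd ℂ) (q (u θ)))
        MeasureTheory.volume 0 (2*π) :=
      (hinv.mul (Complex.continuous_conj.comp hcq)).intervalIntegrable _ _
    have i3 : IntervalIntegrable (fun θ => (2*M:ℂ) * ((u θ)⁻¹)^(n+1))
        MeasureTheory.volume 0 (2*π) := (continuous_const.mul hinv).intervalIntegrable _ _
    have hsplit : ∀ θ : ℝ, ((u θ)⁻¹)^(n+1) * (((2*(q (u θ)).re - 2*M : ℝ)):ℂ)
        = (((u θ)⁻¹)^(n+1) * q (u θ) + ((u θ)⁻¹)^(n+1) * (starRingEnd ℂ) (q (u θ)))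
          - (2*M:ℂ) * ((u θ)⁻¹)^(n+1) := by
      intro θ
      have h := Complex.add_conj (q (u θ))
      push_cast at h ⊢
      linear_combination (-(u θ)⁻¹^(n+1)) * h
    rw [intervalIntegral.integral_congr (fun θ _ => hsplit θ)]
    rw [intervalIntegral.integral_sub (i1.add i2) i3,
      intervalIntegral.integral_add i1 i2, intervalIntegral.integral_const_mul]
    have z1 : (∫ θ in (0:ℝ)..2*π, ((u θ)⁻¹)^(n+1) * (starRingEnd ℂ) (q (u θ))) = 0 :=
      circ_inv_pow_conj_integral_zero q hq hr n
    have z2 : (∫ θ in (0:ℝ)..2*π, ((u θ)⁻¹)^(n+1)) = 0 := by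
      have := circ_inv_pow_conj_integral_zero (fun _ => (1:ℂ)) (differentiable_const 1) hr n
      simpa using this
    rw [z1, z2]
    ring
  -- mean value for the re-integral
  have hmean : (∫ θ in (0:ℝ)..2*π, (q (u θ)).re) = 2*π*(q 0).re := by
    have hint : IntervalIntegrable (fun θ : ℝ => q (u θ)) MeasureTheory.volume 0 (2*π) :=
      hcq.intervalIntegrable _ _
    have := Complex.reCLM.intervalIntegral_comp_comm hint
    rw [circ_mean_value q hq hr] at this
    simpa using this
  -- norm bound
  have hnormA : ‖A‖ ≤ (r:ℝ)⁻¹^(n+1) * (2*M*(2*π) - 2*(2*π*(q 0).re)) := by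
    rw [key]
    have hb := intervalIntegral.norm_integral_le_integral_norm
      (f := fun θ => ((u θ)⁻¹)^(n+1) * (((2*(q (u θ)).re - 2*M : ℝ)):ℂ))
      (a := (0:ℝ)) (b := 2*π) (μ := MeasureTheory.volume) (by positivity)
    refine hb.trans ?_
    have hptw : ∀ θ : ℝ, ‖((u θ)⁻¹)^(n+1) * (((2*(q (u θ)).re - 2*M : ℝ)):ℂ)‖
        = (r:ℝ)⁻¹^(n+1) * (2*M - 2*(q (u θ)).re) := by
      intro θ
      rw [norm_mul, norm_pow, norm_inv]
      have h1 : ‖u θ‖ = r := by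
        simp [hu, norm_circleMap_zero, _root_.abs_of_pos hr]
      rw [h1, Complex.norm_real, Real.norm_eq_abs, _root_.abs_of_nonpos (by linarith [hM θ])]
      ring
    rw [intervalIntegral.integral_congr (fun θ _ => hptw θ), intervalIntegral.integral_const_mul]
    apply mul_le_mul_of_nonneg_left _ (by positivity)
    have hi4 : IntervalIntegrable (fun θ : ℝ => 2 * (q (u θ)).re)
        MeasureTheory.volume 0 (2*π) := by
      apply Continuous.intervalIntegrable
      exact continuous_const.mul (Complex.continuous_re.comp hcq)
    rw [intervalIntegral.integral_sub intervalIntegrable_const hi4,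
      intervalIntegral.integral_const, intervalIntegral.integral_const_mul, hmean]
    simp only [smul_eq_mul]
    apply le_of_eq
    ring
  have h2 : ‖(((2*π:ℝ)):ℂ)⁻¹‖ = (2*π)⁻¹ := by
    rw [norm_inv, Complex.norm_real, Real.norm_eq_abs, _root_.abs_of_pos Real.two_pi_pos]
  have hAn : ‖cauchyPowerSeries q 0 r (n+1) fun _ => 1‖ = (2*π)⁻¹ * ‖A‖ := by
    rw [cauchy_coeff_formula q hr (n+1), norm_mul, h2]
  rw [hAn]
  calc (2*π)⁻¹ * ‖A‖ ≤ (2*π)⁻¹ * ((r:ℝ)⁻¹^(n+1) * (2*M*(2*π) - 2*(2*π*(q 0).re))) :=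
        mul_le_mul_of_nonneg_left hnormA (by positivity)
    _ = 2 * (M - (q 0).re) / r^(n+1) := by
        rw [inv_pow]
        have hrn : (r:ℝ)^(n+1) ≠ 0 := by positivity
        field_simp

lemma entire_poly_of_re_bound (g : ℂ → ℂ) (hg : Differentiable ℂ g) (p : ℕ) (A B : ℝ)
    (hre : ∀ z, (g z).re ≤ A + B * ‖z‖ ^ p) :
    ∃ P : Polynomial ℂ, P.degree ≤ (p:ℕ) ∧ ∀ z, g z = P.eval z := by
  have hball : ∀ r : ℝ, 0 < r → HasFPowerSeriesOnBall g (cauchyPowerSeries g 0 r) 0 ⊤ := by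
    intro r hr
    have := hg.hasFPowerSeriesOnBall (0:ℂ) (R := r.toNNReal) (by simpa using hr)
    rwa [Real.coe_toNNReal r hr.le] at this
  set a : ℕ → ℂ := fun n => cauchyPowerSeries g 0 1 n (fun _ => 1) with ha
  have hagree : ∀ r : ℝ, 0 < r → ∀ n, (cauchyPowerSeries g 0 r n fun _ => 1) = a n := by
    intro r hr n
    rw [(hball r hr).hasFPowerSeriesAt.eq_formalMultilinearSeries
      (hball 1 one_pos).hasFPowerSeriesAt]
  have hvan : ∀ n : ℕ, p < n → a n = 0 := by
    intro n hn
    obtain ⟨m, rfl⟩ : ∃ m, n = m + 1 := ⟨n - 1, by omega⟩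
    have hb : ∀ r : ℝ, 1 ≤ r →
        ‖a (m+1)‖ ≤ 2*(A - (g 0).re)/r^(m+1) + 2*B/r^(m+1-p) := by
      intro r hr1
      have hr : 0 < r := lt_of_lt_of_le one_pos hr1
      have hM : ∀ θ : ℝ, (g (circleMap 0 r θ)).re ≤ A + B * r^p := by
        intro θ
        have := hre (circleMap 0 r θ)
        rwa [norm_circleMap_zero, _root_.abs_of_pos hr] at this
      have hbd := cauchy_coeff_bound g hg hr m (A + B*r^p) hM
      rw [hagree r hr] at hbd
      refine hbd.trans (le_of_eq ?_)
      have hsplit : (r:ℝ)^(m+1) = r^(m+1-p) * r^p := by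
        rw [← pow_add]; congr 1; omega
      have h1 : (r:ℝ)^p ≠ 0 := by positivity
      have h2 : (r:ℝ)^(m+1-p) ≠ 0 := by positivity
      rw [hsplit]
      field_simp
      ring
    have ht : Filter.Tendsto (fun r : ℝ => 2*(A - (g 0).re)/r^(m+1) + 2*B/r^(m+1-p))
        Filter.atTop (nhds 0) := by
      have t1 : Filter.Tendsto (fun r : ℝ => 2*(A - (g 0).re)/r^(m+1))
          Filter.atTop (nhds 0) :=
        Filter.Tendsto.div_atTop tendsto_const_nhds (Filter.tendsto_pow_atTop (by omega))
      have t2 : Filter.Tendsto (fun r : ℝ => 2*B/r^(m+1-p)) Filter.atTop (nhds 0) :=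
        Filter.Tendsto.div_atTop tendsto_const_nhds (Filter.tendsto_pow_atTop (by omega))
      simpa using t1.add t2
    have hle : ‖a (m+1)‖ ≤ 0 :=
      ge_of_tendsto ht (Filter.eventually_atTop.2 ⟨1, fun r hr => hb r hr⟩)
    simpa using norm_le_zero_iff.mp hle
  refine ⟨∑ n ∈ Finset.range (p+1), Polynomial.C (a n) * Polynomial.X ^ n, ?_, ?_⟩
  · apply (Polynomial.degree_sum_le _ _).trans
    apply Finset.sup_le
    intro n hn
    exact (Polynomial.degree_C_mul_X_pow_le _ _).trans
      (by exact_mod_cast Nat.cast_le.mpr (Nat.lt_succ_iff.mp (Finset.mem_range.mp hn)))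
  · intro z
    have hterm : ∀ n : ℕ, (cauchyPowerSeries g 0 1 n fun _ => z) = z^n * a n := by
      intro n
      simp [ha, cauchyPowerSeries, ContinuousMultilinearMap.mkPiRing_apply, smul_eq_mul]
    have hsum : HasSum (fun n => z^n * a n) (g z) := by
      have := (hball 1 one_pos).hasSum (y := z) (by simp)
      simp only [zero_add] at this
      simpa [hterm] using this
    have hfin : HasSum (fun n => z^n * a n)
        (∑ n ∈ Finset.range (p+1), z^n * a n) := by
      apply hasSum_sum_of_ne_finset_zero
      intro n hn
      have hgt : p < n := by
        by_contra hcon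
        exact hn (Finset.mem_range.mpr (by omega))
      rw [hvan n hgt, mul_zero]
    have heq := hsum.unique hfin
    rw [heq, Polynomial.eval_finset_sum]
    apply Finset.sum_congr rfl
    intro n _
    rw [Polynomial.eval_mul, Polynomial.eval_C, Polynomial.eval_pow, Polynomial.eval_X, mul_comm]
/-- A nowhere-vanishing entire function of finite order `p` is the exponential of a polynomial
of degree at most `p`. -/
theorem nowhere_vanishing_finite_order_eq_exp_polynomial
    (f : ℂ → ℂ) (hf : ∀ z, AnalyticAt ℂ f z) (hne : ∀ z, f z ≠ 0)
    (p : ℕ) (C K : ℝ) (hC : 0 < C) (hK : 0 < K)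
    (hbound : ∀ z : ℂ, ‖f z‖ ≤ C * Real.exp (K * ‖z‖ ^ p)) :
    ∃ P : Polynomial ℂ, P.degree ≤ (p : ℕ) ∧ ∀ z : ℂ, f z = Complex.exp (P.eval z) := by
  have hfd : Differentiable ℂ f := fun z => (hf z).differentiableAt
  have hfa : AnalyticOnNhd ℂ f Set.univ := fun z _ => hf z
  have hderiv : Differentiable ℂ (deriv f) := fun z => (hfa.deriv z trivial).differentiableAt
  have hh : Differentiable ℂ (fun z => deriv f z / f z) := hderiv.div hfd hne
  have hh_an : AnalyticOnNhd ℂ (fun z => deriv f z / f z) Set.univ := fun z _ => hh.analyticAt z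
  have hdh : Continuous (deriv (fun z => deriv f z / f z)) :=
    Differentiable.continuous (fun z => (hh_an.deriv z trivial).differentiableAt)
  have heq : ∀ z, deriv f z = (fun z => deriv f z / f z) z * f z := fun z =>
    (div_mul_cancel₀ _ (hne z)).symm
  obtain ⟨g, hg, hfg⟩ := exists_entire_log_aux f (fun z => deriv f z / f z) hfd hh hdh heq hne
  have hre : ∀ z, (g z).re ≤ Real.log C + K * ‖z‖ ^ p := by
    intro z
    have h1 : ‖f z‖ = Real.exp (g z).re := by
      rw [hfg z, Complex.norm_exp]
    have h2 := hbound z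
    rw [h1] at h2
    have h3 := Real.log_le_log (Real.exp_pos _) h2
    rwa [Real.log_exp, Real.log_mul hC.ne' (Real.exp_pos _).ne', Real.log_exp] at h3
  obtain ⟨P, hdeg, hP⟩ := entire_poly_of_re_bound g hg p (Real.log C) K hre
  exact ⟨P, hdeg, fun z => by rw [hfg z, hP z]⟩
end

section
/- Let p ∈ ℕ and let (a_n)_{n∈ℕ} be a sequence of nonzero complex numbers with ∑_n |a_n|^{-(p+1)} < ∞. Then for every z ∈ ℂ the infinite product ∏_{n=0}^{∞} E_p(z/a_n) converges (the family is multipliable), the function f(z) = ∏_{n=0}^{∞} E_p(z/a_n) is entire, and for every w ∈ ℂ the multiplicity of f at w equals the (finite) number of indices n with a_n = w; in particular f(z) = 0 if and only if z = a_n for some n. -/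
open Complex

/-- The Weierstrass elementary factor of order `p`:
`E_p(w) = (1 - w) * exp (∑_{j=1}^p w^j / j)`, with `E_0(w) = 1 - w`. -/
noncomputable def weierstrassFactor (p : ℕ) (w : ℂ) : ℂ :=
  (1 - w) * Complex.exp (∑ j ∈ Finset.Icc 1 p, w ^ j / (j : ℂ))

open Filter

noncomputable def wTerm (p : ℕ) (w : ℂ) : ℂ :=
  Complex.log (1 - w) + ∑ j ∈ Finset.Icc 1 p, w ^ j / (j : ℂ)

lemma sum_Icc_eq_neg_logTaylor (p : ℕ) (w : ℂ) :
    ∑ j ∈ Finset.Icc 1 p, w ^ j / (j : ℂ) = -logTaylor (p + 1) (-w) := by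
  rw [logTaylor, ← Finset.sum_neg_distrib]
  rw [show Finset.Icc 1 p = Finset.range (p+1) \ {0} by
    ext j; simp [Finset.mem_Icc, Finset.mem_range, Nat.lt_succ_iff, Nat.one_le_iff_ne_zero, and_comm]]
  rw [Finset.sum_sdiff_eq_sub (by simp)]
  simp only [Finset.sum_singleton, pow_zero, Nat.cast_zero, div_zero, sub_zero]
  apply Finset.sum_congr rfl
  intro j _
  rw [show (-w)^j = (-1:ℂ)^j * w^j from by rw [neg_pow]]
  have : -((-1:ℂ) ^ (j + 1) * ((-1) ^ j * w ^ j) / j) = ((-1:ℂ))^(2*j+2) * (w ^ j / j) := by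
    rw [show 2*j+2 = (j+1)+(j+1) by ring, pow_add]
    ring
  rw [this, show 2*j+2 = 2*(j+1) by ring, pow_mul]
  norm_num

lemma factor_eq_exp_wTerm (p : ℕ) {w : ℂ} (hw : ‖w‖ < 1) :
    weierstrassFactor p w = Complex.exp (wTerm p w) := by
  have h1 : (1 : ℂ) - w ≠ 0 := by
    intro h
    have : w = 1 := by linear_combination -h
    rw [this] at hw; simp at hw
  rw [wTerm, Complex.exp_add, Complex.exp_log h1, weierstrassFactor]

lemma slit (w : ℂ) (hw : ‖w‖ < 1) : 1 - w ∈ Complex.slitPlane := by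
  have := Complex.mem_slitPlane_of_norm_lt_one (z := -w) (by simpa using hw)
  simpa [sub_eq_add_neg] using this

lemma norm_wTerm_le (p : ℕ) {w : ℂ} (hw : ‖w‖ ≤ 1 / 2) :
    ‖wTerm p w‖ ≤ 2 * ‖w‖ ^ (p + 1) := by
  have hw1 : ‖w‖ < 1 := lt_of_le_of_lt hw (by norm_num)
  have hrw : wTerm p w = -(Complex.log (1 - w)⁻¹ + logTaylor (p + 1) (-w)) := by
    rw [Complex.log_inv _ (Complex.slitPlane_arg_ne_pi (slit w hw1)), wTerm,
      sum_Icc_eq_neg_logTaylor]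
    ring
  rw [hrw, norm_neg]
  refine (Complex.norm_log_one_sub_inv_add_logTaylor_neg_le p hw1).trans ?_
  have h2 : (1 - ‖w‖)⁻¹ ≤ 2 := by
    rw [inv_le_comm₀ (by linarith) (by norm_num)]
    linarith
  have hp1 : (1:ℝ) ≤ (p:ℝ) + 1 := by have := Nat.cast_nonneg (α:=ℝ) p; linarith
  calc ‖w‖ ^ (p + 1) * (1 - ‖w‖)⁻¹ / ((p:ℝ) + 1)
      ≤ ‖w‖ ^ (p + 1) * 2 / ((p:ℝ) + 1) := by gcongr
    _ ≤ ‖w‖ ^ (p + 1) * 2 / 1 := by gcongr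
    _ = 2 * ‖w‖ ^ (p + 1) := by ring

lemma norm_wTerm_le' (p : ℕ) {w : ℂ} (hw : ‖w‖ ≤ 1 / 2) : ‖wTerm p w‖ ≤ 1 := by
  refine (norm_wTerm_le p hw).trans ?_
  have h1 : ‖w‖ ^ (p+1) ≤ (1/2 : ℝ) ^ (p+1) := pow_le_pow_left₀ (norm_nonneg w) hw _
  have h2 : ((1:ℝ)/2) ^ (p+1) ≤ (1/2 : ℝ) ^ 1 :=
    pow_le_pow_of_le_one (by norm_num) (by norm_num) (Nat.succ_le_succ (Nat.zero_le p))
  norm_num at h2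
  linarith

lemma log_factor_eq (p : ℕ) {w : ℂ} (hw : ‖w‖ ≤ 1 / 2) :
    Complex.log (weierstrassFactor p w) = wTerm p w := by
  have hw1 : ‖w‖ < 1 := lt_of_le_of_lt hw (by norm_num)
  rw [factor_eq_exp_wTerm p hw1]
  have h1 : |(wTerm p w).im| ≤ 1 := (Complex.abs_im_le_norm _).trans (norm_wTerm_le' p hw)
  have hpi : (1:ℝ) < Real.pi := by linarith [Real.pi_gt_three]
  rw [Complex.log_exp (by cases abs_le.mp h1; linarith) (by cases abs_le.mp h1; linarith)]

lemma factor_ne_zero (p : ℕ) {w : ℂ} (hw : w ≠ 1) : weierstrassFactor p w ≠ 0 :=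
  mul_ne_zero (sub_ne_zero.mpr (fun h => hw h.symm)) (Complex.exp_ne_zero _)

lemma differentiable_factor (p : ℕ) (c : ℂ) :
    Differentiable ℂ (fun z : ℂ => weierstrassFactor p (z / c)) := by
  unfold weierstrassFactor
  exact ((differentiable_const _).sub (differentiable_id.div_const _)).mul
    (Complex.differentiable_exp.comp
      (Differentiable.fun_sum fun j _ => ((differentiable_id.div_const _).pow j).div_const _))

lemma differentiable_finprod {ι : Type*} (u : Finset ι) (g : ι → ℂ → ℂ)
    (h : ∀ i ∈ u, Differentiable ℂ (g i)) :
    Differentiable ℂ (fun z => ∏ i ∈ u, g i z) := by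
  classical
  induction u using Finset.induction with
  | empty => simpa using differentiable_const (1 : ℂ)
  | @insert i s hi ih =>
    simp only [Finset.prod_insert hi]
    exact (h i (Finset.mem_insert_self i s)).mul
      (ih fun j hj => h j (Finset.mem_insert_of_mem hj))

set_option maxHeartbeats 1000000 in
lemma weierstrass_key (p : ℕ) (a : ℕ → ℂ) (ha : ∀ n, a n ≠ 0)
    (hsum : Summable fun n => ‖a n‖⁻¹ ^ (p + 1)) (w : ℂ) :
    (∀ z ∈ Metric.ball (0:ℂ) (‖w‖+1), Multipliable fun n => weierstrassFactor p (z / a n)) ∧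
    {n : ℕ | a n = w}.Finite ∧
    ∃ hfw : AnalyticAt ℂ (fun z : ℂ => ∏' n : ℕ, weierstrassFactor p (z / a n)) w,
      analyticOrderAt (fun z : ℂ => ∏' n : ℕ, weierstrassFactor p (z / a n)) w = ({n : ℕ | a n = w}.ncard : ℕ∞) := by
  classical
  set R : ℝ := ‖w‖ + 1 with hRdef
  have hR0 : 0 < R := by positivity
  have hfin : ∀ c : ℝ, 0 < c → {n : ℕ | ‖a n‖ < c}.Finite := by
    intro c hc
    have h0 : Filter.Tendsto (fun n => ‖a n‖⁻¹ ^ (p+1)) Filter.atTop (nhds 0) :=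
      hsum.tendsto_atTop_zero
    have hev : ∀ᶠ n in Filter.atTop, ‖a n‖⁻¹ ^ (p+1) < (c⁻¹)^(p+1) :=
      h0.eventually (gt_mem_nhds (by positivity))
    have hev2 : ∀ᶠ n in Filter.atTop, ¬ ‖a n‖ < c := by
      filter_upwards [hev] with n hn hlt
      have h1 : 0 < ‖a n‖ := norm_pos_iff.mpr (ha n)
      have h2 : c⁻¹ < ‖a n‖⁻¹ := by
        rw [inv_lt_inv₀ hc h1]; exact hlt
      have h3 : (c⁻¹)^(p+1) < (‖a n‖⁻¹)^(p+1) :=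
        pow_lt_pow_left₀ h2 (by positivity) (by simp)
      linarith
    rw [← Nat.cofinite_eq_atTop, Filter.eventually_cofinite] at hev2
    simpa using hev2
  have hfinw : {n : ℕ | a n = w}.Finite := by
    apply (hfin (‖w‖ + 1) (by positivity)).subset
    intro n hn
    simp only [Set.mem_setOf_eq] at hn ⊢
    rw [hn]; linarith
  set T : Finset ℕ := (hfin (2*R) (by positivity)).toFinset with hTdef
  have hmemT : ∀ n : ℕ, n ∈ T ↔ ‖a n‖ < 2*R := fun n => Set.Finite.mem_toFinset _
  have hsmall : ∀ n : ℕ, n ∉ T → ∀ z ∈ Metric.ball (0:ℂ) R, ‖z / a n‖ ≤ 1/2 := by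
    intro n hn z hz
    have han : 2*R ≤ ‖a n‖ := not_lt.mp (fun h => hn ((hmemT n).mpr h))
    have hzR : ‖z‖ < R := by simpa [Metric.mem_ball] using hz
    rw [norm_div, div_le_iff₀ (by linarith)]
    linarith
  have hne : ∀ n : ℕ, n ∉ T → ∀ z ∈ Metric.ball (0:ℂ) R, weierstrassFactor p (z / a n) ≠ 0 := by
    intro n hn z hz
    apply factor_ne_zero
    intro h
    have := hsmall n hn z hz
    rw [h] at this
    norm_num at this
  set Tc : Set ℕ := (↑T : Set ℕ)ᶜ with hTcdef
  have hTc : ∀ n : ℕ, n ∈ Tc → n ∉ T := fun n hn => by simpa [hTcdef] using hn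
  have hu : Summable (fun n : Tc => 2 * R^(p+1) * (‖a (n:ℕ)‖⁻¹)^(p+1)) :=
    ((hsum.subtype Tc).mul_left _)
  have hbound : ∀ (n : Tc), ∀ z ∈ Metric.ball (0:ℂ) R,
      ‖wTerm p (z / a (n:ℕ))‖ ≤ 2 * R^(p+1) * (‖a (n:ℕ)‖⁻¹)^(p+1) := by
    intro n z hz
    refine (norm_wTerm_le p (hsmall n (hTc n n.2) z hz)).trans ?_
    have hzR : ‖z‖ ≤ R := le_of_lt (by simpa [Metric.mem_ball] using hz)
    have hp2 : ‖z / a (n:ℕ)‖^(p+1) ≤ (R * ‖a (n:ℕ)‖⁻¹)^(p+1) := by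
      apply pow_le_pow_left₀ (norm_nonneg _)
      rw [norm_div, div_eq_mul_inv]
      gcongr
    calc 2*‖z / a (n:ℕ)‖^(p+1) ≤ 2 * (R * ‖a (n:ℕ)‖⁻¹)^(p+1) := by linarith
      _ = 2 * R^(p+1) * (‖a (n:ℕ)‖⁻¹)^(p+1) := by rw [mul_pow]; ring
  have hlog : ∀ (n : Tc), ∀ z ∈ Metric.ball (0:ℂ) R,
      Complex.log (weierstrassFactor p (z / a (n:ℕ))) = wTerm p (z / a (n:ℕ)) :=
    fun n z hz => log_factor_eq p (hsmall n (hTc n n.2) z hz)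
  have hsummlog : ∀ z ∈ Metric.ball (0:ℂ) R,
      Summable (fun n : Tc => Complex.log (weierstrassFactor p (z / a (n:ℕ)))) := by
    intro z hz
    apply Summable.of_norm_bounded hu
    intro n
    rw [hlog n z hz]
    exact hbound n z hz
  have hmultc : ∀ z ∈ Metric.ball (0:ℂ) R,
      Multipliable ((fun n => weierstrassFactor p (z / a n)) ∘ ((↑) : Tc → ℕ)) := by
    intro z hz
    exact Complex.multipliable_of_summable_log
      (f := (fun n => weierstrassFactor p (z / a n)) ∘ ((↑) : Tc → ℕ)) (hsummlog z hz)
  have hmultT : ∀ z : ℂ,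
      Multipliable ((fun n => weierstrassFactor p (z / a n)) ∘ ((↑) : (↑T : Set ℕ) → ℕ)) :=
    fun z => Multipliable.of_finite
  have hmult : ∀ z ∈ Metric.ball (0:ℂ) R, Multipliable (fun n => weierstrassFactor p (z / a n)) :=
    fun z hz => Multipliable.mul_compl (hmultT z) (hmultc z hz)
  set h : ℂ → ℂ := fun z => ∑' n : Tc, wTerm p (z / a (n:ℕ)) with hhdef
  have htail : ∀ z ∈ Metric.ball (0:ℂ) R,
      (∏' n : Tc, weierstrassFactor p (z / a (n:ℕ))) = Complex.exp (h z) := by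
    intro z hz
    have heq := Complex.cexp_tsum_eq_tprod (f := fun n : Tc => weierstrassFactor p (z / a (n:ℕ)))
      (fun n => hne n (hTc n n.2) z hz) (hsummlog z hz)
    rw [← heq]
    congr 1
    exact tsum_congr (fun n => hlog n z hz)
  have hprodeq : ∀ z ∈ Metric.ball (0:ℂ) R,
      (∏' n : ℕ, weierstrassFactor p (z / a n))
        = (∏ n ∈ T, weierstrassFactor p (z / a n)) * Complex.exp (h z) := by
    intro z hz
    rw [← Multipliable.tprod_mul_tprod_compl (hmultT z) (hmultc z hz),
      Finset.tprod_subtype' T (fun n => weierstrassFactor p (z / a n))]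
    congr 1
    exact htail z hz
  have hdh : DifferentiableOn ℂ h (Metric.ball (0:ℂ) R) := by
    apply differentiableOn_tsum_of_summable_norm hu ?_ Metric.isOpen_ball
      (fun n z hz => hbound n z hz)
    intro n z hz
    apply DifferentiableAt.differentiableWithinAt
    have hs : (1 : ℂ) - z / a (n:ℕ) ∈ Complex.slitPlane :=
      slit _ (lt_of_le_of_lt (hsmall n (hTc n n.2) z hz) (by norm_num))
    show DifferentiableAt ℂ (fun z => wTerm p (z / a (n:ℕ))) z
    unfold wTerm
    exact ((((differentiableAt_const _).sub (differentiableAt_id.div_const _) :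
      DifferentiableAt ℂ (fun x : ℂ => (1 : ℂ) - x / a (n:ℕ)) z)).clog hs).add
      (DifferentiableAt.fun_sum fun j _ => ((differentiableAt_id.div_const _).pow j).div_const _)
  have hDF : DifferentiableOn ℂ (fun z : ℂ => ∏' n : ℕ, weierstrassFactor p (z / a n))
      (Metric.ball (0:ℂ) R) := by
    have hg : DifferentiableOn ℂ
        (fun z => (∏ n ∈ T, weierstrassFactor p (z / a n)) * Complex.exp (h z))
        (Metric.ball (0:ℂ) R) :=
      ((differentiable_finprod T _ (fun n _ => differentiable_factor p (a n))).differentiableOn).mul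
        hdh.cexp
    exact hg.congr hprodeq
  have hwball : w ∈ Metric.ball (0:ℂ) R := by
    simp only [Metric.mem_ball, dist_zero_right, hRdef]
    linarith
  have hfw : AnalyticAt ℂ (fun z : ℂ => ∏' n : ℕ, weierstrassFactor p (z / a n)) w :=
    hDF.analyticAt (Metric.isOpen_ball.mem_nhds hwball)
  refine ⟨hmult, hfinw, hfw, ?_⟩
  set S : Finset ℕ := T.filter (fun n => a n = w) with hSdef
  have hSset : {n : ℕ | a n = w} = ↑S := by
    ext n
    simp only [Set.mem_setOf_eq, Finset.coe_filter, hSdef, Set.mem_setOf_eq, hmemT]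
    constructor
    · intro hn
      refine ⟨?_, hn⟩
      rw [hn]; simp only [hRdef]; linarith [norm_nonneg w]
    · exact fun h => h.2
  set m := S.card with hmdef
  set G : ℂ → ℂ := fun z =>
    (∏ n ∈ S, (-(a n)⁻¹ * Complex.exp (∑ j ∈ Finset.Icc 1 p, (z / a n) ^ j / (j:ℂ)))) *
    ((∏ n ∈ T.filter (fun n => ¬ a n = w), weierstrassFactor p (z / a n)) * Complex.exp (h z))
    with hGdef
  have hGdiff : DifferentiableOn ℂ G (Metric.ball (0:ℂ) R) := by
    apply DifferentiableOn.mul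
    · apply Differentiable.differentiableOn
      apply differentiable_finprod
      intro n _
      exact (differentiable_const _).mul (Complex.differentiable_exp.comp
        (Differentiable.fun_sum fun j _ => ((differentiable_id.div_const _).pow j).div_const _))
    · exact ((differentiable_finprod _ _ (fun n _ =>
        differentiable_factor p (a n))).differentiableOn).mul hdh.cexp
  have hGan : AnalyticAt ℂ G w := hGdiff.analyticAt (Metric.isOpen_ball.mem_nhds hwball)
  have hGne : G w ≠ 0 := by
    apply mul_ne_zero
    · exact Finset.prod_ne_zero_iff.mpr fun n _ =>
        mul_ne_zero (neg_ne_zero.mpr (inv_ne_zero (ha n))) (Complex.exp_ne_zero _)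
    · apply mul_ne_zero
      · apply Finset.prod_ne_zero_iff.mpr
        intro n hn
        have hanw : ¬ a n = w := (Finset.mem_filter.mp hn).2
        apply factor_ne_zero
        intro hcontra
        exact hanw ((div_eq_one_iff_eq (ha n)).mp hcontra).symm
      · exact Complex.exp_ne_zero _
  have hkey : ∀ᶠ z in nhds w, (∏' n : ℕ, weierstrassFactor p (z / a n)) = (z - w)^m • G z := by
    filter_upwards [Metric.isOpen_ball.mem_nhds hwball] with z hz
    rw [smul_eq_mul, hprodeq z hz,
      ← Finset.prod_filter_mul_prod_filter_not T (fun n => a n = w)]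
    have hSprod : ∏ n ∈ S, weierstrassFactor p (z / a n)
        = (z - w)^m * ∏ n ∈ S,
            (-(a n)⁻¹ * Complex.exp (∑ j ∈ Finset.Icc 1 p, (z / a n)^j/(j:ℂ))) := by
      have hterm : ∀ n ∈ S, weierstrassFactor p (z / a n)
          = (z - w) * (-(a n)⁻¹ * Complex.exp (∑ j ∈ Finset.Icc 1 p, (z / a n)^j/(j:ℂ))) := by
        intro n hn
        have hna : a n = w := (Finset.mem_filter.mp hn).2
        have hw0 : a n ≠ 0 := ha n
        have h1 : (1:ℂ) - z / a n = (z - w) * (-(a n)⁻¹) := by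
          rw [← hna]
          field_simp
          ring
        rw [weierstrassFactor, h1]
        ring
      rw [Finset.prod_congr rfl hterm, Finset.prod_mul_distrib, Finset.prod_const, hmdef]
    rw [hSprod]
    ring
  have horder : analyticOrderAt (fun z : ℂ => ∏' n : ℕ, weierstrassFactor p (z / a n)) w = (m : ℕ∞) :=
    (hfw.analyticOrderAt_eq_natCast (n := m)).mpr ⟨G, hGan, hGne, hkey⟩
  rw [horder, hSset, Set.ncard_coe_finset]

/-- Convergence and zeros of the Weierstrass canonical product: if
`∑ ‖a n‖⁻¹ ^ (p+1) < ∞` (with all `a n ≠ 0`), then `∏_n E_p(z / a_n)` converges for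
every `z`, defines an entire function whose multiplicity at each point `w` is the (finite)
number of indices `n` with `a n = w`; in particular it vanishes exactly at the `a n`. -/
theorem weierstrass_product_properties
    (p : ℕ) (a : ℕ → ℂ) (ha : ∀ n, a n ≠ 0)
    (hsum : Summable fun n => ‖a n‖⁻¹ ^ (p + 1)) :
    (∀ z : ℂ, Multipliable fun n => weierstrassFactor p (z / a n)) ∧
    ∃ hf : ∀ z : ℂ, AnalyticAt ℂ (fun z : ℂ => ∏' n : ℕ, weierstrassFactor p (z / a n)) z,
      (∀ w : ℂ, {n : ℕ | a n = w}.Finite ∧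
        analyticOrderAt (fun z : ℂ => ∏' n : ℕ, weierstrassFactor p (z / a n)) w = ({n : ℕ | a n = w}.ncard : ℕ∞)) ∧
      ∀ z : ℂ, (∏' n : ℕ, weierstrassFactor p (z / a n)) = 0 ↔ ∃ n : ℕ, a n = z := by
  have key := fun w => weierstrass_key p a ha hsum w
  have hmult : ∀ z : ℂ, Multipliable fun n => weierstrassFactor p (z / a n) := fun z =>
    (key z).1 z (by simp only [Metric.mem_ball, dist_zero_right]; exact lt_add_one ‖z‖)
  refine ⟨hmult, fun z => ((key z).2.2).choose,
    fun w => ⟨(key w).2.1, ((key w).2.2).choose_spec⟩, ?_⟩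
  intro z
  have hord := ((key z).2.2).choose_spec
  have hfin := (key z).2.1
  constructor
  · intro h0
    by_contra hne
    push_neg at hne
    have hempty : {n : ℕ | a n = z} = ∅ := by ext n; simpa using hne n
    have h00 : (({n : ℕ | a n = z}.ncard : ℕ∞)) = ((0:ℕ) : ℕ∞) := by
      rw [hempty]; simp
    obtain ⟨g, _, hgne, heq⟩ :=
      (((key z).2.2).choose.analyticOrderAt_eq_natCast (n := 0)).mp (hord.trans h00)
    have h2 := heq.self_of_nhds
    simp only [sub_self, pow_zero, one_smul] at h2
    rw [h0] at h2
    exact hgne h2.symm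
  · rintro ⟨n, hn⟩
    have hpos : 0 < {k : ℕ | a k = z}.ncard := (Set.ncard_pos hfin).mpr ⟨n, hn⟩
    obtain ⟨g, _, _, heq⟩ :=
      (((key z).2.2).choose.analyticOrderAt_eq_natCast (n := {k : ℕ | a k = z}.ncard)).mp hord
    have h2 := heq.self_of_nhds
    rw [h2, sub_self, zero_pow (Nat.pos_iff_ne_zero.mp hpos), zero_smul]
end

section
/- Let E be a complex Banach space, x₀ ∈ E, r > 0, and let Ω be the open ball of radius r centered at x₀. Let F₁, F₂ : E → ℂ be analytic on Ω, and let k ∈ ℕ. Suppose that for every x ∈ Ω and every integer n ≥ k the n-th iterated Fréchet derivatives of F₁ and F₂ at x coincide. Then there exist continuous multilinear forms T_n : E^n → ℂ for 0 ≤ n < k such that F₁(x) − F₂(x) = ∑_{n=0}^{k−1} T_n(x, …, x) for all x ∈ Ω; that is, F₁ − F₂ is a continuous polynomial function of degree at most k − 1 on Ω. -/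
open Metric

/-- If two functions, analytic on an open ball of a complex Banach space, have the same
iterated Fréchet derivatives of every order `n ≥ k` at every point of the ball, then their
difference is a continuous polynomial function of degree at most `k - 1` on the ball. -/
theorem analytic_diff_is_polynomial_of_iteratedFDeriv_eq
    (E : Type*) [NormedAddCommGroup E] [NormedSpace ℂ E] [CompleteSpace E]
    (x₀ : E) (r : ℝ) (hr : 0 < r)
    (F₁ F₂ : E → ℂ)
    (hF₁ : ∀ x ∈ ball x₀ r, AnalyticAt ℂ F₁ x)
    (hF₂ : ∀ x ∈ ball x₀ r, AnalyticAt ℂ F₂ x)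
    (k : ℕ)
    (hderiv : ∀ x ∈ ball x₀ r, ∀ n : ℕ, k ≤ n →
      iteratedFDeriv ℂ n F₁ x = iteratedFDeriv ℂ n F₂ x) :
    ∃ T : (n : ℕ) → ContinuousMultilinearMap ℂ (fun _ : Fin n => E) ℂ,
      ∀ x ∈ ball x₀ r,
        F₁ x - F₂ x = ∑ n ∈ Finset.range k, T n (fun _ => x) := by
  have hx₀ : x₀ ∈ ball x₀ r := mem_ball_self hr
  obtain ⟨q₁, r₁, h₁⟩ : ∃ q₁ r₁, HasFPowerSeriesOnBall F₁ q₁ x₀ r₁ := by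
    obtain ⟨q₁, hq₁⟩ := hF₁ x₀ hx₀
    obtain ⟨r₁, h₁⟩ := hq₁
    exact ⟨q₁, r₁, h₁⟩
  obtain ⟨q₂, r₂, h₂⟩ : ∃ q₂ r₂, HasFPowerSeriesOnBall F₂ q₂ x₀ r₂ := by
    obtain ⟨q₂, hq₂⟩ := hF₂ x₀ hx₀
    obtain ⟨r₂, h₂⟩ := hq₂
    exact ⟨q₂, r₂, h₂⟩
  set q : FormalMultilinearSeries ℂ E ℂ := q₁ - q₂ with hq_def
  -- the coefficients of `q` vanish on the diagonal for `n ≥ k`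
  have hzero : ∀ n, k ≤ n → ∀ y : E, q n (fun _ => y) = 0 := by
    intro n hn y
    have e1 := h₁.factorial_smul y n
    have e2 := h₂.factorial_smul y n
    rw [hderiv x₀ hx₀ n hn] at e1
    have e3 : n.factorial • (q₁ n fun _ => y) = n.factorial • (q₂ n fun _ => y) :=
      e1.trans e2.symm
    have e4 : q₁ n (fun _ => y) = q₂ n (fun _ => y) := by
      have hfac : (n.factorial : ℂ) ≠ 0 := Nat.cast_ne_zero.mpr n.factorial_ne_zero
      rw [nsmul_eq_mul, nsmul_eq_mul] at e3
      exact mul_left_cancel₀ hfac e3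
    show (q₁ n - q₂ n) (fun _ => y) = 0
    rw [ContinuousMultilinearMap.sub_apply, e4, sub_self]
  -- the truncated series
  set p : FormalMultilinearSeries ℂ E ℂ :=
    fun n => if n < k then q n else 0 with hp_def
  have hp_zero : ∀ n, k ≤ n → p n = 0 := by
    intro n hn
    simp only [hp_def, if_neg (not_lt.mpr hn)]
  have hp_radius : p.radius = ⊤ :=
    p.radius_eq_top_of_eventually_eq_zero
      (Filter.eventually_atTop.mpr ⟨k, fun n hn => hp_zero n hn⟩)
  -- diagonal values of `p` and `q` agree
  have hpq : ∀ n (y : E), p n (fun _ => y) = q n (fun _ => y) := by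
    intro n y
    rcases lt_or_ge n k with h | h
    · simp [hp_def, h]
    · rw [hp_zero n h, hzero n h y, ContinuousMultilinearMap.zero_apply]
  -- `F₁ - F₂` has power series `p` at `x₀`
  obtain ⟨ρ, hρ⟩ : HasFPowerSeriesAt (fun x => F₁ x - F₂ x) q x₀ := by
    have := h₁.hasFPowerSeriesAt.sub h₂.hasFPowerSeriesAt
    exact this
  have hG : HasFPowerSeriesOnBall (fun x => F₁ x - F₂ x) p x₀ ρ :=
    { r_le := by rw [hp_radius]; exact le_top
      r_pos := hρ.r_pos
      hasSum := by
        intro y hy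
        have := hρ.hasSum hy
        convert this using 2 with n
        exact hpq n y }
  -- `H` is the sum of `p`, analytic everywhere
  have hp_pos : (0 : ENNReal) < p.radius := by rw [hp_radius]; exact ENNReal.zero_lt_top
  have hH0 : HasFPowerSeriesOnBall p.sum p 0 p.radius := p.hasFPowerSeriesOnBall hp_pos
  have hH : HasFPowerSeriesOnBall (fun z => p.sum (z - x₀)) p x₀ p.radius := by
    have := hH0.comp_sub x₀
    rwa [zero_add] at this
  -- identity theorem on the ball
  have hGanal : AnalyticOnNhd ℂ (fun x => F₁ x - F₂ x) (ball x₀ r) :=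
    fun x hx => (hF₁ x hx).sub (hF₂ x hx)
  have hHanal : AnalyticOnNhd ℂ (fun z => p.sum (z - x₀)) (ball x₀ r) := by
    intro x _
    apply hH.analyticAt_of_mem
    rw [hp_radius]
    exact EMetric.mem_ball.mpr (edist_lt_top x x₀)
  have heq : (fun x => F₁ x - F₂ x) =ᶠ[nhds x₀] (fun z => p.sum (z - x₀)) := by
    filter_upwards [EMetric.ball_mem_nhds x₀ hρ.r_pos] with x hx
    have hx' : x - x₀ ∈ Metric.eball (0 : E) ρ := by
      rw [EMetric.mem_ball] at hx ⊢
      simpa [edist_eq_enorm_sub] using hx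
    have := hG.sum hx'
    rw [add_sub_cancel] at this
    exact this
  have hEqOn : Set.EqOn (fun x => F₁ x - F₂ x) (fun z => p.sum (z - x₀)) (ball x₀ r) :=
    hGanal.eqOn_of_preconnected_of_eventuallyEq hHanal
      (convex_ball x₀ r).isPreconnected hx₀ heq
  -- change origin to 0
  set T : FormalMultilinearSeries ℂ E ℂ := p.changeOrigin (-x₀) with hT_def
  have hT_zero : ∀ n, k ≤ n → T n = 0 := by
    intro n hn
    have hseries : ∀ l, p.changeOriginSeries n l = 0 := by
      intro l
      unfold FormalMultilinearSeries.changeOriginSeries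
      apply Finset.sum_eq_zero
      intro s _
      unfold FormalMultilinearSeries.changeOriginSeriesTerm
      rw [hp_zero (n + l) (le_trans hn (Nat.le_add_right n l))]
      exact LinearIsometryEquiv.map_zero _
    show (p.changeOriginSeries n).sum (-x₀) = 0
    unfold FormalMultilinearSeries.sum
    have : ∀ l : ℕ, p.changeOriginSeries n l (fun _ => -x₀) = 0 := by
      intro l
      rw [hseries l]
      rfl
    simp only [this, tsum_zero]
  refine ⟨T, fun x hx => ?_⟩
  have h1 : F₁ x - F₂ x = p.sum (x - x₀) := hEqOn hx
  have h2 : T.sum x = p.sum (-x₀ + x) := by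
    apply p.changeOrigin_eval
    rw [hp_radius]
    exact ENNReal.add_lt_top.mpr ⟨ENNReal.coe_lt_top, ENNReal.coe_lt_top⟩
  rw [neg_add_eq_sub] at h2
  have h3 : T.sum x = ∑ n ∈ Finset.range k, T n (fun _ => x) := by
    unfold FormalMultilinearSeries.sum
    apply tsum_eq_sum
    intro n hn
    rw [hT_zero n (by simpa using hn)]
    rfl
  rw [h1, ← h2, h3]
end

section
/- Let E be a normed vector space over ℂ, n ≥ 1, and let T : E^n → ℂ be a continuous symmetric n-multilinear form, i.e. T(h_{σ(1)}, …, h_{σ(n)}) = T(h_1, …, h_n) for every permutation σ of {1, …, n}. Suppose M ≥ 0 is such that |T(h, …, h)| ≤ M for every h ∈ E with ‖h‖ ≤ 1. Then for all h_1, …, h_n ∈ E one has |T(h_1, …, h_n)| ≤ (n^n / n!) · M · ‖h_1‖ ⋯ ‖h_n‖. -/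
open Finset

noncomputable def polSgn (b : Bool) : ℂ := if b then 1 else -1

lemma polSgn_norm (b : Bool) : ‖polSgn b‖ = 1 := by cases b <;> simp [polSgn]

lemma sum_polSgn_pow (c : ℕ) :
    (∑ b : Bool, polSgn b ^ (c + 1)) = if Odd c then 2 else 0 := by
  rw [Fintype.sum_bool]
  have ht : polSgn true = 1 := rfl
  have hf : polSgn false = -1 := rfl
  rw [ht, hf, one_pow]
  rcases Nat.even_or_odd c with hc | hc
  · rw [if_neg (by simp [Nat.not_odd_iff_even, hc]), Odd.neg_one_pow (Even.add_one hc)]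
    ring
  · rw [if_pos hc, Even.neg_one_pow (Odd.add_one hc)]
    ring

lemma pol_sign_sum (n : ℕ) (r : Fin n → Fin n) :
    (∑ ε : Fin n → Bool, (∏ i, polSgn (ε i)) * ∏ i, polSgn (ε (r i)))
      = if Function.Bijective r then (2 : ℂ) ^ n else 0 := by
  have key : ∀ ε : Fin n → Bool,
      (∏ i, polSgn (ε i)) * ∏ i, polSgn (ε (r i))
        = ∏ j, polSgn (ε j) ^ ((univ.filter fun i => r i = j).card + 1) := by
    intro ε
    have h1 : (∏ i, polSgn (ε (r i)))
        = ∏ j, polSgn (ε j) ^ (univ.filter fun i => r i = j).card := by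
      rw [← Finset.prod_fiberwise_of_maps_to (g := r) (fun x _ => mem_univ _)
        (fun i => polSgn (ε (r i)))]
      refine Finset.prod_congr rfl fun j _ => ?_
      rw [Finset.prod_congr rfl (fun i hi => by rw [(mem_filter.mp hi).2]),
        Finset.prod_const]
    rw [h1, ← Finset.prod_mul_distrib]
    exact Finset.prod_congr rfl fun j _ => by ring
  simp_rw [key]
  rw [← Fintype.prod_sum (fun j b => polSgn b ^ ((univ.filter fun i => r i = j).card + 1))]
  simp_rw [sum_polSgn_pow]
  by_cases hb : Function.Bijective r
  · rw [if_pos hb]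
    have hcard : ∀ j, (univ.filter fun i => r i = j).card = 1 := by
      intro j
      have : (univ.filter fun i => r i = j) = {(Equiv.ofBijective r hb).symm j} := by
        ext i
        simp only [mem_filter, mem_univ, true_and, mem_singleton]
        constructor
        · intro hij
          apply hb.injective
          rw [hij]
          exact (Equiv.ofBijective_apply_symm_apply r hb j).symm
        · rintro rfl
          exact Equiv.ofBijective_apply_symm_apply r hb j
      rw [this, Finset.card_singleton]
    simp [hcard]
  · rw [if_neg hb]
    have : ¬ Function.Surjective r := fun hs =>
      hb (Finite.surjective_iff_bijective.mp hs)
    rw [Function.Surjective] at this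
    push_neg at this
    obtain ⟨j, hj⟩ := this
    refine Finset.prod_eq_zero (mem_univ j) ?_
    have : (univ.filter fun i => r i = j).card = 0 := by
      rw [Finset.card_eq_zero]
      ext i
      simp [hj i]
    rw [this]
    simp

lemma pol_identity (E : Type*) [NormedAddCommGroup E] [NormedSpace ℂ E]
    (n : ℕ) (T : ContinuousMultilinearMap ℂ (fun _ : Fin n => E) ℂ)
    (hsym : ∀ (σ : Equiv.Perm (Fin n)) (h : Fin n → E),
      T (fun i => h (σ i)) = T h) (h : Fin n → E) :
    (∑ ε : Fin n → Bool, (∏ i, polSgn (ε i)) • T (fun i => ∑ j, polSgn (ε j) • h j))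
      = ((2 : ℂ) ^ n * n.factorial) • T h := by
  have expand : ∀ ε : Fin n → Bool,
      T (fun i => ∑ j, polSgn (ε j) • h j)
        = ∑ r : Fin n → Fin n, (∏ i, polSgn (ε (r i))) • T (fun i => h (r i)) := by
    intro ε
    have := T.toMultilinearMap.map_sum (g := fun _ j => polSgn (ε j) • h j)
    simp only [ContinuousMultilinearMap.coe_coe] at this
    rw [this]
    refine Finset.sum_congr rfl fun r _ => ?_
    exact T.toMultilinearMap.map_smul_univ (fun i => polSgn (ε (r i))) (fun i => h (r i))
  simp_rw [expand, Finset.smul_sum, smul_smul]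
  rw [Finset.sum_comm]
  simp_rw [← Finset.sum_smul, pol_sign_sum]
  rw [Finset.sum_congr rfl (fun r _ => by rw [ite_smul, zero_smul]),
    ← Finset.sum_filter]
  have : ∀ r ∈ univ.filter (fun r : Fin n → Fin n => Function.Bijective r),
      ((2 : ℂ) ^ n) • T (fun i => h (r i)) = ((2 : ℂ) ^ n) • T h := by
    intro r hr
    have hb := (mem_filter.mp hr).2
    have hh := hsym (Equiv.ofBijective r hb) h
    simp only [Equiv.ofBijective_apply] at hh
    rw [hh]
  rw [Finset.sum_congr rfl this, Finset.sum_const]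
  have hcard : (univ.filter fun r : Fin n → Fin n => Function.Bijective r).card
      = n.factorial := by
    have : (univ.filter fun r : Fin n → Fin n => Function.Bijective r).card
        = (univ : Finset (Equiv.Perm (Fin n))).card := by
      symm
      refine Finset.card_bij (fun σ _ => ⇑σ) (fun σ _ => ?_) (fun σ _ τ _ hst => ?_)
        (fun r hr => ?_)
      · exact mem_filter.mpr ⟨mem_univ _, σ.bijective⟩
      · exact Equiv.coe_fn_injective hst
      · exact ⟨Equiv.ofBijective r (mem_filter.mp hr).2, mem_univ _, rfl⟩
    rw [this, ← Fintype.card, Fintype.card_perm, Fintype.card_fin]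
  rw [hcard, ← Nat.cast_smul_eq_nsmul ℂ, smul_smul, mul_comm]

/-- Polarization estimate: a continuous symmetric `n`-multilinear form which is bounded by `M`
on the diagonal of the unit ball satisfies `‖T (h₁, …, hₙ)‖ ≤ (n^n / n!) M ∏ ‖hᵢ‖`. -/
theorem symmetric_multilinear_polarization_bound
    (E : Type*) [NormedAddCommGroup E] [NormedSpace ℂ E]
    (n : ℕ) (hn : 1 ≤ n)
    (T : ContinuousMultilinearMap ℂ (fun _ : Fin n => E) ℂ)
    (hsym : ∀ (σ : Equiv.Perm (Fin n)) (h : Fin n → E),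
      T (fun i => h (σ i)) = T h)
    (M : ℝ) (hM : 0 ≤ M)
    (hdiag : ∀ h : E, ‖h‖ ≤ 1 → ‖T (fun _ => h)‖ ≤ M) :
    ∀ h : Fin n → E,
      ‖T h‖ ≤ ((n : ℝ) ^ n / (n.factorial : ℝ)) * M * ∏ i, ‖h i‖ := by
  have hn0 : (0:ℝ) < n := by exact_mod_cast hn
  -- diagonal bound at radius n
  have hdiagn : ∀ x : E, ‖x‖ ≤ n → ‖T (fun _ => x)‖ ≤ (n:ℝ)^n * M := by
    intro x hx
    have key : T (fun _ : Fin n => x) = ((n:ℂ))^n • T (fun _ => ((n:ℂ))⁻¹ • x) := by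
      have hm := T.toMultilinearMap.map_smul_univ (fun _ : Fin n => (n:ℂ))
        (fun _ => ((n:ℂ))⁻¹ • x)
      simp only [ContinuousMultilinearMap.coe_coe] at hm
      rw [Finset.prod_const, Finset.card_univ, Fintype.card_fin] at hm
      rw [← hm]
      congr 1
      funext i
      rw [smul_smul, mul_inv_cancel₀ (by exact_mod_cast hn0.ne'), one_smul]
    rw [key, norm_smul, norm_pow]
    have h1 : ‖((n:ℂ))‖ = (n:ℝ) := Complex.norm_natCast n
    rw [h1]
    refine mul_le_mul_of_nonneg_left ?_ (by positivity)
    apply hdiag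
    rw [norm_smul, norm_inv, h1]
    rw [inv_mul_le_iff₀ hn0]
    simpa using hx
  -- the unit-ball case
  have main : ∀ h : Fin n → E, (∀ i, ‖h i‖ ≤ 1) →
      ‖T h‖ ≤ (n:ℝ)^n / n.factorial * M := by
    intro h hh
    have hid := pol_identity E n T hsym h
    have hfact : (0:ℝ) < n.factorial := by exact_mod_cast n.factorial_pos
    have h2pow : (0:ℝ) < 2^n := by positivity
    have hnormid : ‖((2:ℂ)^n * n.factorial) • T h‖
        = 2^n * (n.factorial:ℝ) * ‖T h‖ := by
      rw [norm_smul, norm_mul, norm_pow]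
      norm_num
    have hsumbound :
        ‖∑ ε : Fin n → Bool,
            (∏ i, polSgn (ε i)) • T (fun i => ∑ j, polSgn (ε j) • h j)‖
          ≤ 2^n * ((n:ℝ)^n * M) := by
      refine le_trans (norm_sum_le _ _) ?_
      have hterm : ∀ ε : Fin n → Bool,
          ‖(∏ i, polSgn (ε i)) • T (fun i => ∑ j, polSgn (ε j) • h j)‖
            ≤ (n:ℝ)^n * M := by
        intro ε
        rw [norm_smul, norm_prod]
        simp only [polSgn_norm, Finset.prod_const_one, one_mul]
        apply hdiagn
        refine le_trans (norm_sum_le _ _) ?_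
        have : ∀ j, ‖polSgn (ε j) • h j‖ ≤ 1 := by
          intro j
          rw [norm_smul, polSgn_norm, one_mul]
          exact hh j
        calc (∑ j, ‖polSgn (ε j) • h j‖) ≤ ∑ _j : Fin n, (1:ℝ) :=
              Finset.sum_le_sum fun j _ => this j
          _ = n := by simp
      refine le_trans (Finset.sum_le_sum fun ε _ => hterm ε) ?_
      rw [Finset.sum_const, Finset.card_univ]
      simp [Fintype.card_fun]
    rw [div_mul_eq_mul_div, le_div_iff₀ hfact]
    have hchain : 2^n * ((n.factorial:ℝ) * ‖T h‖) ≤ 2^n * ((n:ℝ)^n * M) := by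
      rw [← mul_assoc, ← hnormid, ← hid]
      exact hsumbound
    have := (mul_le_mul_iff_right₀ h2pow).mp hchain
    linarith
  -- general case by homogeneity
  intro h
  by_cases hz : ∀ i, h i ≠ 0
  · set g : Fin n → E := fun i => ((‖h i‖ : ℂ))⁻¹ • h i with hgdef
    have hnorm0 : ∀ i, ‖h i‖ ≠ 0 := fun i => norm_ne_zero_iff.mpr (hz i)
    have hgnorm : ∀ i, ‖g i‖ ≤ 1 := by
      intro i
      rw [hgdef]
      simp only [norm_smul, norm_inv, Complex.norm_real, norm_norm]
      rw [inv_mul_cancel₀ (hnorm0 i)]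
    have hTh : T h = (∏ i, ((‖h i‖ : ℂ))) • T g := by
      have hm := T.toMultilinearMap.map_smul_univ (fun i => ((‖h i‖ : ℂ))) g
      simp only [ContinuousMultilinearMap.coe_coe] at hm
      rw [← hm]
      congr 1
      funext i
      rw [hgdef]
      simp only
      rw [smul_smul, mul_inv_cancel₀ (by exact_mod_cast hnorm0 i), one_smul]
    rw [hTh, norm_smul, norm_prod]
    have hnp : (∏ i, ‖((‖h i‖ : ℂ))‖) = ∏ i, ‖h i‖ := by
      refine Finset.prod_congr rfl fun i _ => ?_
      rw [Complex.norm_real, norm_norm]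
    rw [hnp, mul_comm ((n:ℝ)^n / n.factorial * M)]
    exact mul_le_mul_of_nonneg_left (main g hgnorm) (Finset.prod_nonneg fun i _ => norm_nonneg _)
  · push_neg at hz
    obtain ⟨i, hi⟩ := hz
    have hT0 : T h = 0 := T.toMultilinearMap.map_coord_zero i hi
    rw [hT0, norm_zero]
    have hf : (0:ℝ) < n.factorial := by exact_mod_cast n.factorial_pos
    positivity
end

section
/- Let f : ℝ → ℂ be a smooth (C^∞) function. For Re(s) > 0 the integral I(s) = ∫_0^1 t^{s−1} f(t) dt converges and defines a holomorphic function of s on the half-plane {Re(s) > 0}. Moreover there exists a function g : ℂ → ℂ, meromorphic on all of ℂ, such that g(s) = I(s) for Re(s) > 0, g is analytic at every point s that is not a nonpositive integer, and for every k ∈ ℕ one has lim_{s → −k} (s + k)·g(s) = f^{(k)}(0) / k!; in particular all poles of g are simple and located at s ∈ {0, −1, −2, …}. -/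
open MeasureTheory Filter Complex
open scoped Topology

noncomputable section MellinAuxSection

namespace MellinAux

def coeff (f : ℝ → ℂ) (k : ℕ) : ℂ := iteratedDeriv k f 0 / (k.factorial : ℂ)

/-- Taylor remainder. -/

def rem (f : ℝ → ℂ) (N : ℕ) (t : ℝ) : ℂ :=
  f t - ∑ k ∈ Finset.range N, coeff f k * (t : ℂ) ^ k

lemma mellinEq (h : ℝ → ℂ) (s : ℂ) :
    (∫ t in Set.Ioc (0:ℝ) 1, (t : ℂ) ^ (s - 1) * h t)
      = mellin (Set.indicator (Set.Ioc 0 1) h) s := by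
  rw [mellin]
  have heq : (fun t : ℝ => (t : ℂ) ^ (s - 1) • Set.indicator (Set.Ioc 0 1) h t)
      = Set.indicator (Set.Ioc (0:ℝ) 1) (fun t : ℝ => (t : ℂ) ^ (s-1) * h t) := by
    ext t
    by_cases ht : t ∈ Set.Ioc (0:ℝ) 1 <;>
      simp [Set.indicator_of_mem, Set.indicator_of_notMem, ht]
  rw [heq, setIntegral_indicator measurableSet_Ioc,
    Set.inter_eq_self_of_subset_right Set.Ioc_subset_Ioi_self]

lemma key (h : ℝ → ℂ) (hc : Continuous h) (N : ℕ) (C : ℝ)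
    (hC : ∀ t ∈ Set.Ioc (0:ℝ) 1, ‖h t‖ ≤ C * t ^ N) (s : ℂ) (hs : -(N:ℝ) < s.re) :
    IntegrableOn (fun t : ℝ => (t : ℂ) ^ (s - 1) * h t) (Set.Ioc 0 1) ∧
      AnalyticAt ℂ (fun s : ℂ => ∫ t in Set.Ioc (0:ℝ) 1, (t : ℂ) ^ (s - 1) * h t) s := by
  set F := Set.indicator (Set.Ioc (0:ℝ) 1) h with hF
  have hFint : Integrable F := by
    rw [hF, integrable_indicator_iff measurableSet_Ioc]
    exact (hc.continuousOn.integrableOn_compact isCompact_Icc).mono_set Set.Ioc_subset_Icc_self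
  have hFi : MeasureTheory.LocallyIntegrableOn F (Set.Ioi 0) :=
    hFint.locallyIntegrable.locallyIntegrableOn _
  have htop : ∀ a : ℝ, F =O[atTop] (fun x : ℝ => x ^ (-a)) := by
    intro a
    have h0 : F =ᶠ[atTop] (fun _ => 0) := by
      filter_upwards [eventually_gt_atTop 1] with t ht
      exact Set.indicator_of_notMem (fun hmem => absurd hmem.2 (not_le.2 ht)) _
    exact h0.trans_isBigO (Asymptotics.isBigO_zero _ _)
  have hbot : F =O[𝓝[>] (0:ℝ)] (fun x : ℝ => x ^ (-(-(N:ℝ)))) := by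
    rw [Asymptotics.isBigO_iff]
    refine ⟨|C|, ?_⟩
    filter_upwards [Ioc_mem_nhdsGT_of_mem (by norm_num : (0:ℝ) ∈ Set.Ico (0:ℝ) 1)] with t ht
    rw [hF, Set.indicator_of_mem ht]
    calc ‖h t‖ ≤ C * t ^ N := hC t ht
      _ ≤ |C| * t ^ N :=
        mul_le_mul_of_nonneg_right (le_abs_self C) (pow_nonneg ht.1.le N)
      _ = |C| * ‖t ^ (-(-(N:ℝ)))‖ := by
        rw [neg_neg, Real.norm_eq_abs, _root_.abs_of_nonneg (Real.rpow_nonneg ht.1.le _),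
          Real.rpow_natCast]
  constructor
  · have hconv : MellinConvergent F s :=
      mellinConvergent_of_isBigO_rpow hFi (htop (s.re + 1)) (by linarith) hbot hs
    refine ((hconv.mono_set Set.Ioc_subset_Ioi_self).congr_fun ?_ measurableSet_Ioc)
    intro t ht
    simp only [hF, Set.indicator_of_mem ht, smul_eq_mul]
  · have U_open : IsOpen {z : ℂ | -(N:ℝ) < z.re} := isOpen_lt continuous_const continuous_re
    have hd : DifferentiableOn ℂ (mellin F) {z : ℂ | -(N:ℝ) < z.re} := by
      intro z hz
      exact (mellin_differentiableAt_of_isBigO_rpow hFi (htop (z.re+1))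
        (by linarith) hbot hz).differentiableWithinAt
    have hA := hd.analyticAt (U_open.mem_nhds hs)
    rw [show (fun s : ℂ => ∫ t in Set.Ioc (0:ℝ) 1, (t:ℂ)^(s-1) * h t) = mellin F from
      funext fun s => mellinEq h s]
    exact hA

lemma rem_continuous (f : ℝ → ℂ) (hf : ContDiff ℝ (⊤ : ℕ∞) f) (N : ℕ) :
    Continuous (rem f N) := by
  unfold rem
  exact hf.continuous.sub (by continuity)

lemma iteratedDerivWithin_Icc (f : ℝ → ℂ) (hf : ContDiff ℝ (⊤ : ℕ∞) f) (k : ℕ) :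
    iteratedDerivWithin k f (Set.Icc (0:ℝ) 1) 0 = iteratedDeriv k f 0 := by
  have hA : HasFTaylorSeriesUpToOn (k:ℕ∞) f (ftaylorSeriesWithin ℝ f Set.univ) Set.univ :=
    ((hf.of_le (by exact_mod_cast le_top)).contDiffOn (n := (k:ℕ∞))).ftaylorSeriesWithin uniqueDiffOn_univ
  have hB := (hA.mono (Set.subset_univ (Set.Icc (0:ℝ) 1))).eq_iteratedFDerivWithin_of_uniqueDiffOn
    (by exact_mod_cast le_refl (k:ℕ∞)) (uniqueDiffOn_Icc one_pos) (by norm_num : (0:ℝ) ∈ Set.Icc (0:ℝ) 1)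
  rw [iteratedDerivWithin_eq_iteratedFDerivWithin, ← hB, ftaylorSeriesWithin_univ,
    iteratedDeriv_eq_iteratedFDeriv]
  rfl

lemma rem_bound (f : ℝ → ℂ) (hf : ContDiff ℝ (⊤ : ℕ∞) f) (N : ℕ) :
    ∃ C : ℝ, ∀ t ∈ Set.Ioc (0:ℝ) 1, ‖rem f N t‖ ≤ C * t ^ N := by
  cases N with
  | zero =>
    obtain ⟨C, hC⟩ := (isCompact_Icc (a := (0:ℝ)) (b := 1)).exists_bound_of_continuousOn
      hf.continuous.continuousOn
    exact ⟨C, fun t ht => by simpa [rem] using hC t (Set.Ioc_subset_Icc_self ht)⟩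
  | succ n =>
    obtain ⟨C, hC⟩ := exists_taylor_mean_remainder_bound (by norm_num : (0:ℝ) ≤ 1)
      ((hf.of_le (by exact_mod_cast le_top)).contDiffOn : ContDiffOn ℝ ((n:ℕ)+1) f (Set.Icc 0 1))
    refine ⟨C, fun t ht => ?_⟩
    have h1 := hC t (Set.Ioc_subset_Icc_self ht)
    rw [taylor_within_apply] at h1
    have hsum : ∀ k ∈ Finset.range (n+1),
        ((k.factorial : ℝ)⁻¹ * (t - 0) ^ k) • iteratedDerivWithin k f (Set.Icc (0:ℝ) 1) 0
          = coeff f k * (t:ℂ)^k := by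
      intro k _
      rw [iteratedDerivWithin_Icc f hf k, Complex.real_smul, coeff]
      have hk : (k.factorial : ℂ) ≠ 0 := Nat.cast_ne_zero.2 k.factorial_ne_zero
      push_cast
      field_simp
      ring
    rw [Finset.sum_congr rfl hsum] at h1
    simpa [rem, sub_zero] using h1

lemma mono_integral (k : ℕ) (s : ℂ) (hs : 0 < (s + k).re) :
    (∫ t in Set.Ioc (0:ℝ) 1, (t : ℂ) ^ (s - 1) * (t:ℂ) ^ k) = 1 / (s + k) := by
  have hne : s + (k:ℂ) ≠ 0 := fun h => by simp [h] at hs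
  have h1 : ∀ t ∈ Set.Ioc (0:ℝ) 1, (t:ℂ)^(s-1) * (t:ℂ)^k = (t:ℂ) ^ (s + k - 1) := by
    intro t ht
    rw [← Complex.cpow_natCast, ← Complex.cpow_add _ _ (Complex.ofReal_ne_zero.2 ht.1.ne'),
      show s - 1 + k = s + k - 1 by ring]
  rw [setIntegral_congr_fun measurableSet_Ioc h1,
    ← intervalIntegral.integral_of_le (by norm_num : (0:ℝ) ≤ 1),
    integral_cpow (Or.inl (by simpa using hs))]
  simp [hne, sub_add_cancel, Complex.zero_cpow hne]

def G (f : ℝ → ℂ) (N : ℕ) (s : ℂ) : ℂ :=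
  (∑ k ∈ Finset.range N, coeff f k / (s + k)) +
    ∫ t in Set.Ioc (0:ℝ) 1, (t : ℂ) ^ (s - 1) * rem f N t

-- dummy stand-ins for already-proved lemmas

lemma monomial_integrable (N : ℕ) (s : ℂ) (hs : -(N:ℝ) < s.re) :
    IntegrableOn (fun t : ℝ => (t : ℂ) ^ (s - 1) * (t:ℂ) ^ N) (Set.Ioc 0 1) :=
  (key (fun t : ℝ => (t:ℂ)^N) (by continuity) N 1
    (fun t ht => by simp [_root_.abs_of_nonneg ht.1.le]) s hs).1

lemma step (f : ℝ → ℂ) (hf : ContDiff ℝ (⊤ : ℕ∞) f) (N : ℕ) (s : ℂ) (hs : -(N:ℝ) < s.re) :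
    G f (N+1) s = G f N s := by
  obtain ⟨C, hC⟩ := rem_bound f hf (N+1)
  have hs' : -((N+1:ℕ):ℝ) < s.re := by push_cast; linarith
  have I1 : IntegrableOn (fun t : ℝ => (t : ℂ) ^ (s - 1) * rem f (N+1) t) (Set.Ioc 0 1) :=
    (key (rem f (N+1)) (rem_continuous f hf (N+1)) (N+1) C hC s hs').1
  have I2 : IntegrableOn (fun t : ℝ => coeff f N * ((t : ℂ) ^ (s - 1) * (t:ℂ) ^ N))
      (Set.Ioc 0 1) := (monomial_integrable N s hs).const_mul _
  have hsplit : ∀ t ∈ Set.Ioc (0:ℝ) 1, (t:ℂ)^(s-1) * rem f N t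
      = (t:ℂ)^(s-1) * rem f (N+1) t + coeff f N * ((t:ℂ)^(s-1) * (t:ℂ)^N) := by
    intro t _
    simp only [rem, Finset.sum_range_succ]
    ring
  have hint : (∫ t in Set.Ioc (0:ℝ) 1, (t:ℂ)^(s-1) * rem f N t)
      = (∫ t in Set.Ioc (0:ℝ) 1, (t:ℂ)^(s-1) * rem f (N+1) t)
        + coeff f N * (1/(s + N)) := by
    rw [setIntegral_congr_fun measurableSet_Ioc hsplit, integral_add I1 I2,
      MeasureTheory.integral_const_mul, mono_integral N s (by simp; linarith)]
  simp only [G, Finset.sum_range_succ, hint]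
  ring

lemma agree (f : ℝ → ℂ) (hf : ContDiff ℝ (⊤ : ℕ∞) f) (N M : ℕ) (hNM : N ≤ M) (s : ℂ)
    (hs : -(N:ℝ) < s.re) : G f M s = G f N s := by
  induction M, hNM using Nat.le_induction with
  | base => rfl
  | succ M hM ih =>
    rw [step f hf M s (lt_of_le_of_lt (by exact_mod_cast neg_le_neg (Nat.cast_le.2 hM : (N:ℝ) ≤ M)) hs), ih]

def nn (s : ℂ) : ℕ := ⌈-s.re⌉₊ + 1

lemma nn_lt (s : ℂ) : -((nn s : ℕ):ℝ) < s.re := by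
  have := Nat.le_ceil (-s.re)
  have h2 : (⌈-s.re⌉₊ : ℝ) < ((nn s : ℕ) : ℝ) := by simp only [nn]; push_cast; linarith
  linarith

lemma nn_le {s : ℂ} {M : ℕ} (h : -(M:ℝ) ≤ s.re) : nn s ≤ M + 1 := by
  have : ⌈-s.re⌉₊ ≤ M := Nat.ceil_le.2 (by linarith)
  simpa [nn] using this

lemma rem_analytic (f : ℝ → ℂ) (hf : ContDiff ℝ (⊤ : ℕ∞) f) (N : ℕ) (s : ℂ) (hs : -(N:ℝ) < s.re) :
    AnalyticAt ℂ (fun s : ℂ => ∫ t in Set.Ioc (0:ℝ) 1, (t : ℂ) ^ (s - 1) * rem f N t) s := by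
  obtain ⟨C, hC⟩ := rem_bound f hf N
  exact (key (rem f N) (rem_continuous f hf N) N C hC s hs).2

lemma g_eventually_eq (f : ℝ → ℂ) (hf : ContDiff ℝ (⊤ : ℕ∞) f) (s₀ : ℂ) :
    (fun s => G f (nn s) s) =ᶠ[𝓝 s₀] G f (nn s₀ + 1) := by
  have hopen : IsOpen {z : ℂ | -((nn s₀ : ℕ):ℝ) < z.re} :=
    isOpen_lt continuous_const continuous_re
  filter_upwards [hopen.mem_nhds (nn_lt s₀)] with z hz
  exact (agree f hf (nn z) (nn s₀ + 1) (nn_le (le_of_lt hz)) z (nn_lt z)).symm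

lemma sum_meromorphicAt (cf : ℕ → ℂ) (T : Finset ℕ) (s₀ : ℂ) :
    MeromorphicAt (fun s : ℂ => ∑ k ∈ T, cf k / (s + k)) s₀ := by
  classical
  induction T using Finset.induction_on with
  | empty => simpa using MeromorphicAt.const (0:ℂ) s₀
  | insert a T' ha ih =>
    have : (fun s : ℂ => ∑ k ∈ insert a T', cf k / (s + k))
        = fun s : ℂ => cf a / (s + a) + ∑ k ∈ T', cf k / (s + k) := by
      funext s; rw [Finset.sum_insert ha]
    rw [this]
    exact (((MeromorphicAt.const (cf a) s₀)).div
      ((analyticAt_id.add analyticAt_const).meromorphicAt)).add ih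

lemma sum_analyticAt (cf : ℕ → ℂ) (T : Finset ℕ) (s₀ : ℂ)
    (h : ∀ k ∈ T, s₀ + (k:ℂ) ≠ 0) :
    AnalyticAt ℂ (fun s : ℂ => ∑ k ∈ T, cf k / (s + k)) s₀ :=
  T.analyticAt_fun_sum fun k hk =>
    analyticAt_const.div (analyticAt_id.add analyticAt_const) (h k hk)

theorem main (f : ℝ → ℂ) (hf : ContDiff ℝ (⊤ : ℕ∞) f) :
    ∃ g : ℂ → ℂ,
      MeromorphicOn g Set.univ ∧
      (∀ s : ℂ, 0 < s.re →
        g s = ∫ t in Set.Ioc (0 : ℝ) 1, (t : ℂ) ^ (s - 1) * f t) ∧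
      (∀ s : ℂ, (∀ k : ℕ, s ≠ -(k : ℂ)) → AnalyticAt ℂ g s) ∧
      ∀ k : ℕ, Tendsto (fun s : ℂ => (s + (k : ℂ)) * g s)
        (nhdsWithin (-(k : ℂ)) {(-(k : ℂ))}ᶜ)
        (nhds (iteratedDeriv k f 0 / (k.factorial : ℂ))) := by
  refine ⟨fun s => G f (nn s) s, ?_, ?_, ?_, ?_⟩
  · -- meromorphic
    intro s₀ _
    set M := nn s₀ + 1 with hM
    have hmer : MeromorphicAt (G f M) s₀ := by
      apply (sum_meromorphicAt (coeff f) (Finset.range M) s₀).add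
      exact (rem_analytic f hf M s₀
        (lt_of_le_of_lt (by push_cast [hM]; linarith [nn_lt s₀]) (nn_lt s₀))).meromorphicAt
    exact hmer.congr (((g_eventually_eq f hf s₀).symm).filter_mono nhdsWithin_le_nhds)
  · -- equals integral on the right half-plane
    intro s hs
    have h0 : G f (nn s) s = G f 0 s :=
      agree f hf 0 (nn s) (Nat.zero_le _) s (by simpa using hs)
    show G f (nn s) s = _
    rw [h0]
    simp [G, rem]
  · -- analytic off nonpositive integers
    intro s₀ hs₀
    set M := nn s₀ + 1 with hM
    have hre : -(M:ℝ) < s₀.re := by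
      have := nn_lt s₀; push_cast [hM]; linarith
    have hana : AnalyticAt ℂ (G f M) s₀ := by
      apply (sum_analyticAt (coeff f) (Finset.range M) s₀ ?_).add (rem_analytic f hf M s₀ hre)
      intro k _
      intro h
      exact hs₀ k (by linear_combination h)
    exact hana.congr ((g_eventually_eq f hf s₀).symm)
  · -- residues
    intro k
    set s₀ : ℂ := -(k:ℂ) with hs₀
    set M := nn s₀ + 1 with hM
    have hkM : k < M := by
      have : -((M:ℕ):ℝ) < s₀.re := by
        have := nn_lt s₀; push_cast [hM]; linarith
      by_contra hcon
      push_neg at hcon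
      have : ((M:ℕ):ℝ) ≤ (k:ℝ) := by exact_mod_cast hcon
      simp only [hs₀, Complex.neg_re, Complex.natCast_re] at *
      linarith
    have hre : -(M:ℝ) < s₀.re := by
      have := nn_lt s₀; push_cast [hM]; linarith
    -- the function to which (s+k) * g s is eventually equal on the punctured nbhd
    have heq : (fun s : ℂ => (s + k) * G f (nn s) s)
        =ᶠ[𝓝[≠] s₀] fun s : ℂ =>
          (∑ j ∈ Finset.range M, coeff f j * ((s + k) / (s + j)))
            + (s + k) * ∫ t in Set.Ioc (0:ℝ) 1, (t : ℂ) ^ (s - 1) * rem f M t := by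
      filter_upwards [(g_eventually_eq f hf s₀).filter_mono nhdsWithin_le_nhds] with z hz
      rw [hz, G, mul_add, Finset.mul_sum]
      congr 1
      refine Finset.sum_congr rfl fun j _ => by ring
    have hlim : Tendsto (fun s : ℂ =>
          (∑ j ∈ Finset.range M, coeff f j * ((s + k) / (s + j)))
            + (s + k) * ∫ t in Set.Ioc (0:ℝ) 1, (t : ℂ) ^ (s - 1) * rem f M t)
        (𝓝[≠] s₀) (𝓝 (coeff f k)) := by
      have hsum : Tendsto (fun s : ℂ => ∑ j ∈ Finset.range M, coeff f j * ((s + k) / (s + j)))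
          (𝓝[≠] s₀) (𝓝 (∑ j ∈ Finset.range M, if j = k then coeff f k else 0)) := by
        apply tendsto_finset_sum
        intro j hj
        by_cases hjk : j = k
        · subst hjk
          simp only [if_pos rfl]
          have hev : (fun s : ℂ => coeff f j * ((s + j) / (s + j)))
              =ᶠ[𝓝[≠] s₀] fun _ => coeff f j := by
            filter_upwards [self_mem_nhdsWithin] with z hz
            have hz' : z ≠ s₀ := hz
            have : z + (j:ℂ) ≠ 0 := fun h => hz' (by rw [hs₀]; linear_combination h)
            rw [div_self this, mul_one]
          exact Tendsto.congr' hev.symm tendsto_const_nhds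
        · simp only [if_neg hjk]
          have hden : s₀ + (j:ℂ) ≠ 0 := by
            intro h
            apply hjk
            have : (j:ℂ) = (k:ℂ) := by rw [hs₀] at h; linear_combination h
            exact_mod_cast this
          have hcont : Tendsto (fun s : ℂ => coeff f j * ((s + k) / (s + j)))
              (𝓝 s₀) (𝓝 (coeff f j * ((s₀ + k) / (s₀ + j)))) := by
            apply Tendsto.const_mul
            exact Tendsto.div ((continuous_id.add continuous_const).tendsto s₀)
              ((continuous_id.add continuous_const).tendsto s₀) hden
          have hval : coeff f j * ((s₀ + k) / (s₀ + j)) = 0 := by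
            rw [hs₀]; simp
          rw [← hval]
          exact hcont.mono_left nhdsWithin_le_nhds
      have hH : Tendsto (fun s : ℂ =>
            (s + k) * ∫ t in Set.Ioc (0:ℝ) 1, (t : ℂ) ^ (s - 1) * rem f M t)
          (𝓝[≠] s₀) (𝓝 0) := by
        have hana := rem_analytic f hf M s₀ hre
        have hcont := hana.continuousAt
        have : Tendsto (fun s : ℂ =>
              (s + k) * ∫ t in Set.Ioc (0:ℝ) 1, (t : ℂ) ^ (s - 1) * rem f M t)
            (𝓝 s₀) (𝓝 ((s₀ + k) * ∫ t in Set.Ioc (0:ℝ) 1, (t : ℂ) ^ (s₀ - 1) * rem f M t)) :=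
          ((continuous_id.add continuous_const).tendsto s₀).mul hcont
        have hz : (s₀ + (k:ℂ)) * (∫ t in Set.Ioc (0:ℝ) 1, (t : ℂ) ^ (s₀ - 1) * rem f M t) = 0 := by
          rw [hs₀]; simp
        rw [hz] at this
        exact this.mono_left nhdsWithin_le_nhds
      have := hsum.add hH
      rw [Finset.sum_ite_eq' (Finset.range M) k (fun _ => coeff f k),
        if_pos (Finset.mem_range.2 hkM), add_zero] at this
      exact this
    exact Tendsto.congr' heq.symm hlim

end MellinAux

end MellinAuxSection

open MeasureTheory Filter Complex

/-- Riesz regularization / meromorphic continuation of `s ↦ ∫_0^1 t^{s-1} f(t) dt` for a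
smooth `f`: the integral converges and is holomorphic for `Re s > 0`, and extends to a
meromorphic function on `ℂ`, analytic off the nonpositive integers, with simple poles at
`s = -k` of residue `f^{(k)}(0) / k!`. -/
theorem mellin_smooth_meromorphic_continuation
    (f : ℝ → ℂ) (hf : ContDiff ℝ (⊤ : ℕ∞) f) :
    (∀ s : ℂ, 0 < s.re →
      IntegrableOn (fun t : ℝ => (t : ℂ) ^ (s - 1) * f t) (Set.Ioc 0 1)) ∧
    (∀ s : ℂ, 0 < s.re →
      AnalyticAt ℂ (fun s : ℂ => ∫ t in Set.Ioc (0 : ℝ) 1, (t : ℂ) ^ (s - 1) * f t) s) ∧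
    ∃ g : ℂ → ℂ,
      MeromorphicOn g Set.univ ∧
      (∀ s : ℂ, 0 < s.re →
        g s = ∫ t in Set.Ioc (0 : ℝ) 1, (t : ℂ) ^ (s - 1) * f t) ∧
      (∀ s : ℂ, (∀ k : ℕ, s ≠ -(k : ℂ)) → AnalyticAt ℂ g s) ∧
      ∀ k : ℕ, Tendsto (fun s : ℂ => (s + (k : ℂ)) * g s) (nhdsWithin (-(k : ℂ)) {(-(k : ℂ))}ᶜ)
        (nhds (iteratedDeriv k f 0 / (k.factorial : ℂ))) := by
  obtain ⟨C, hC⟩ := (isCompact_Icc (a := (0:ℝ)) (b := 1)).exists_bound_of_continuousOn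
    hf.continuous.continuousOn
  have hC' : ∀ t ∈ Set.Ioc (0:ℝ) 1, ‖f t‖ ≤ C * t ^ 0 := fun t ht => by
    simpa using hC t (Set.Ioc_subset_Icc_self ht)
  refine ⟨fun s hs => ?_, fun s hs => ?_, MellinAux.main f hf⟩
  · exact (MellinAux.key f hf.continuous 0 C hC' s (by simpa using hs)).1
  · exact (MellinAux.key f hf.continuous 0 C hC' s (by simpa using hs)).2
end
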